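/- arXiv:2504.20221 — 11 statements merged into one kernel-verified Lean document; each statement's English description precedes it below -/
import Mathlib

section
/- Let d > 0, let U ∈ C¹([−d,0];ℝ) be nonvanishing, let κ > 0, and let p ∈ C²([−d,0];ℝ) satisfy p″ − 2(U′/U)p′ − κ²p = 0 on [−d,0] with p′(−d) = 0. Then either p is identically zero on [−d,0], or p(x₃)p′(x₃) > 0 for every x₃ ∈ (−d,0]. -/
open Set Filter Topology

-- helper: a function vanishing on an open interval and continuous within a superset
-- vanishes on the closed interval
lemma aux_zero_closure {h : ℝ → ℝ} {s : Set ℝ} {a b z : ℝ} (hab : a < b)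
    (hz : z ∈ Set.Icc a b) (hsub : Set.Ioo a b ⊆ s)
    (hc : ContinuousWithinAt h s z) (h0 : ∀ y ∈ Set.Ioo a b, h y = 0) : h z = 0 := by
  have hzc : z ∈ closure (Set.Ioo a b) := by rw [closure_Ioo hab.ne]; exact hz
  have hne : (𝓝[Set.Ioo a b] z).NeBot := mem_closure_iff_nhdsWithin_neBot.mp hzc
  have t1 : Tendsto h (𝓝[Set.Ioo a b] z) (𝓝 (h z)) :=
    (hc.mono hsub).tendsto
  have t2 : Tendsto h (𝓝[Set.Ioo a b] z) (𝓝 0) := by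
    refine Tendsto.congr' ?_ tendsto_const_nhds
    filter_upwards [self_mem_nhdsWithin] with y hy using (h0 y hy).symm
  exact tendsto_nhds_unique t1 t2

/-- A solution of `p″ − 2(U′/U)p′ − κ²p = 0` on `[−d,0]` with
`p′(−d) = 0` is either identically zero or satisfies `p·p′ > 0` on `(−d,0]`. -/
theorem stmt_4 (d : ℝ) (hd : 0 < d) (U p : ℝ → ℝ) (κ : ℝ) (hκ : 0 < κ)
    (hU : ContDiffOn ℝ 1 U (Set.Icc (-d) 0))
    (hU0 : ∀ t ∈ Set.Icc (-d) 0, U t ≠ 0)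
    (hp : ContDiffOn ℝ 2 p (Set.Icc (-d) 0))
    (hode : ∀ x ∈ Set.Icc (-d) 0,
      derivWithin (derivWithin p (Set.Icc (-d) 0)) (Set.Icc (-d) 0) x
        - 2 * (derivWithin U (Set.Icc (-d) 0) x / U x) * derivWithin p (Set.Icc (-d) 0) x
        - κ ^ 2 * p x = 0)
    (hbc : derivWithin p (Set.Icc (-d) 0) (-d) = 0) :
    (∀ x ∈ Set.Icc (-d) 0, p x = 0) ∨
    (∀ x ∈ Set.Ioc (-d) 0, 0 < p x * derivWithin p (Set.Icc (-d) 0) x) := by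
  set s : Set ℝ := Set.Icc (-d) 0 with hs_def
  have hd0 : (-d : ℝ) < 0 := by linarith
  have hsu : UniqueDiffOn ℝ s := uniqueDiffOn_Icc hd0
  set p1 : ℝ → ℝ := derivWithin p s with hp1_def
  set p2 : ℝ → ℝ := derivWithin p1 s with hp2_def
  set U1 : ℝ → ℝ := derivWithin U s with hU1_def
  have hpc : ContinuousOn p s := hp.continuousOn
  have hpd : DifferentiableOn ℝ p s := hp.differentiableOn (by norm_num)
  have hp1cd : ContDiffOn ℝ 1 p1 s := hp.derivWithin hsu (by norm_num)
  have hp1c : ContinuousOn p1 s := hp1cd.continuousOn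
  have hp1d : DifferentiableOn ℝ p1 s := hp1cd.differentiableOn one_ne_zero
  have hUc : ContinuousOn U s := hU.continuousOn
  have hUd : DifferentiableOn ℝ U s := hU.differentiableOn one_ne_zero
  have hU1c : ContinuousOn U1 s := (hU.derivWithin (m := 0) hsu (by norm_num)).continuousOn
  -- ODE rearranged
  have hode' : ∀ x ∈ s, p2 x = 2 * (U1 x / U x) * p1 x + κ ^ 2 * p x := fun x hx => by
    have := hode x hx; linarith
  -- derivative facts
  have hderp : ∀ x ∈ s, HasDerivWithinAt p (p1 x) s x := fun x hx =>
    (hpd x hx).hasDerivWithinAt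
  have hderp1 : ∀ x ∈ s, HasDerivWithinAt p1 (p2 x) s x := fun x hx => by
    exact (hp1d x hx).hasDerivWithinAt
  have hderU : ∀ x ∈ s, HasDerivWithinAt U (U1 x) s x := fun x hx =>
    (hUd x hx).hasDerivWithinAt
  -- the key auxiliary function
  set f : ℝ → ℝ := fun y => p y * p1 y / (U y) ^ 2 with hf_def
  set F : ℝ → ℝ := fun y => ((p1 y) ^ 2 + κ ^ 2 * (p y) ^ 2) / (U y) ^ 2 with hF_def
  have hderf : ∀ x ∈ s, HasDerivWithinAt f (F x) s x := by
    intro x hx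
    have hUx : U x ≠ 0 := hU0 x hx
    have hnum : HasDerivWithinAt (fun y => p y * p1 y)
        (p1 x * p1 x + p x * p2 x) s x := (hderp x hx).mul (hderp1 x hx)
    have hden : HasDerivWithinAt (fun y => (U y) ^ 2)
        ((2 : ℕ) * (U x) ^ 1 * U1 x) s x := (hderU x hx).pow 2
    have h := hnum.div hden (pow_ne_zero 2 hUx)
    refine h.congr_deriv ?_
    rw [hF_def, hode' x hx]
    field_simp
    ring
  have hfc : ContinuousOn f s :=
    (hpc.mul hp1c).div (hUc.pow 2) (fun y hy => pow_ne_zero 2 (hU0 y hy))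
  -- f is monotone on s
  have hint : interior s = Set.Ioo (-d) 0 := interior_Icc
  have hderat : ∀ x ∈ Set.Ioo (-d) 0, HasDerivAt f (F x) x := by
    intro x hx
    exact (hderf x (Set.mem_Icc_of_Ioo hx)).hasDerivAt (Icc_mem_nhds hx.1 hx.2)
  have hmono : MonotoneOn f s := by
    apply monotoneOn_of_deriv_nonneg (convex_Icc _ _) hfc
    · rw [hint]; intro x hx
      exact (hderat x hx).differentiableAt.differentiableWithinAt
    · rw [hint]; intro x hx
      rw [(hderat x hx).deriv]
      have : U x ≠ 0 := hU0 x (Set.mem_Icc_of_Ioo hx)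
      positivity
  have hfd0 : f (-d) = 0 := by
    rw [hf_def]; simp [← hp1_def, hbc]
  have hds : (-d : ℝ) ∈ s := Set.left_mem_Icc.mpr (by linarith)
  -- f nonneg on s
  have hfnn : ∀ x ∈ s, 0 ≤ f x := fun x hx => by
    have := hmono hds hx hx.1
    rwa [hfd0] at this
  by_cases hall : ∀ x ∈ s, p x = 0
  · exact Or.inl hall
  right
  push_neg at hall
  obtain ⟨x₀, hx₀s, hx₀⟩ := hall
  intro x hx
  have hxs : x ∈ s := Set.mem_Icc_of_Ioc hx
  -- p x * p1 x ≥ 0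
  have hge : 0 ≤ p x * p1 x := by
    have h1 := hfnn x hxs
    have hUx : U x ≠ 0 := hU0 x hxs
    have he : p x * p1 x = f x * U x ^ 2 := by rw [hf_def]; field_simp
    rw [he]
    positivity
  rcases hge.lt_or_eq with hlt | heq
  · exact hlt
  exfalso
  have hdx : -d < x := hx.1
  have hsub : Set.Ioo (-d) x ⊆ s := fun y hy => ⟨hy.1.le, le_trans hy.2.le hx.2⟩
  have hfx0 : f x = 0 := by rw [hf_def]; simp [← heq]
  -- f vanishes on [-d, x]
  have hf0 : ∀ y ∈ Set.Icc (-d) x, f y = 0 := by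
    intro y hy
    have hys : y ∈ s := ⟨hy.1, le_trans hy.2 hx.2⟩
    have h1 : f y ≤ f x := hmono hys hxs hy.2
    have h2 : 0 ≤ f y := hfnn y hys
    linarith
  -- p and p1 vanish on Ioo(-d, x)
  have hzero : ∀ y ∈ Set.Ioo (-d) x, p y = 0 ∧ p1 y = 0 := by
    intro y hy
    have hyo : y ∈ Set.Ioo (-d) 0 := ⟨hy.1, lt_of_lt_of_le hy.2 hx.2⟩
    have hys : y ∈ s := Set.mem_Icc_of_Ioo hyo
    have hF0 : F y = 0 := by
      have hda : HasDerivAt f (F y) y := hderat y hyo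
      have heq' : f =ᶠ[𝓝 y] fun _ => (0:ℝ) := by
        filter_upwards [Ioo_mem_nhds hy.1 hy.2] with z hz
        exact hf0 z (Set.mem_Icc_of_Ioo hz)
      have hconst : HasDerivAt f 0 y :=
        (hasDerivAt_const y (0:ℝ)).congr_of_eventuallyEq heq'
      exact hda.unique hconst
    have hUy : U y ≠ 0 := hU0 y hys
    have hnum : p1 y ^ 2 + κ ^ 2 * p y ^ 2 = 0 := by
      rw [hF_def] at hF0
      field_simp at hF0
      linarith
    have hκ2 : (0:ℝ) < κ ^ 2 := by positivity
    have hpy2 : p y ^ 2 = 0 := by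
      nlinarith [sq_nonneg (p1 y), sq_nonneg (p y)]
    have hp1y2 : p1 y ^ 2 = 0 := by nlinarith [sq_nonneg (p y)]
    exact ⟨sq_eq_zero_iff.mp hpy2, sq_eq_zero_iff.mp hp1y2⟩
  -- endpoint values at x
  have hpx0 : p x = 0 :=
    aux_zero_closure hdx (Set.right_mem_Icc.mpr hdx.le) hsub (hpc x hxs)
      (fun y hy => (hzero y hy).1)
  have hp1x0 : p1 x = 0 :=
    aux_zero_closure hdx (Set.right_mem_Icc.mpr hdx.le) hsub (hp1c x hxs)
      (fun y hy => (hzero y hy).2)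
  -- Gronwall forward from x
  obtain ⟨C, hC⟩ := IsCompact.exists_bound_of_continuousOn isCompact_Icc
    (hU1c.div hUc hU0)
  set M : ℝ := max C 0 with hM_def
  set K : ℝ := 2 * M + κ with hK_def
  have hM0 : 0 ≤ M := le_max_right C 0
  set v : ℝ → ℝ × ℝ := fun y => (κ * p y, p1 y) with hv_def
  have hsub2 : Set.Icc x 0 ⊆ s := Set.Icc_subset_Icc hdx.le le_rfl
  have hvc : ContinuousOn v (Set.Icc x 0) :=
    ((continuousOn_const.mul (hpc.mono hsub2)).prodMk (hp1c.mono hsub2))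
  have hv' : ∀ y ∈ Set.Ico x 0,
      HasDerivWithinAt v ((fun y => (κ * p1 y, p2 y)) y) (Set.Ici y) y := by
    intro y hy
    have hys : y ∈ s := ⟨le_trans hdx.le hy.1, hy.2.le⟩
    have h1 : HasDerivWithinAt v (κ * p1 y, p2 y) s y :=
      ((hderp y hys).const_mul κ).prodMk (hderp1 y hys)
    apply h1.mono_of_mem_nhdsWithin
    have hmem : Set.Ici y ∩ Set.Iio 0 ∈ 𝓝[Set.Ici y] y :=
      inter_mem_nhdsWithin _ (Iio_mem_nhds hy.2)
    exact mem_of_superset hmem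
      (fun z hz => ⟨le_trans (le_trans hdx.le hy.1) hz.1, hz.2.le⟩)
  have ha : ‖v x‖ ≤ 0 := by
    have : v x = 0 := by simp [hv_def, hpx0, hp1x0, Prod.ext_iff]
    rw [this]; simp
  have hbound : ∀ y ∈ Set.Ico x 0,
      ‖(fun y => (κ * p1 y, p2 y)) y‖ ≤ K * ‖v y‖ + 0 := by
    intro y hy
    have hys : y ∈ s := ⟨le_trans hdx.le hy.1, hy.2.le⟩
    have hCy : |U1 y / U y| ≤ M :=
      le_trans (le_of_eq (Real.norm_eq_abs _).symm) (le_trans (hC y hys) (le_max_left C 0))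
    have hnv : ‖v y‖ = max |κ * p y| |p1 y| := by
      simp [hv_def, Prod.norm_def, Real.norm_eq_abs, abs_mul]
    have hnv' : ‖(fun y => (κ * p1 y, p2 y)) y‖ = max |κ * p1 y| |p2 y| := by
      simp [Prod.norm_def, Real.norm_eq_abs, abs_mul]
    rw [hnv, hnv', add_zero]
    have ek1 : |κ * p1 y| = κ * |p1 y| := by rw [abs_mul, abs_of_pos hκ]
    have hm1 : |κ * p y| ≤ max |κ * p y| |p1 y| := le_max_left _ _
    have hm2 : |p1 y| ≤ max |κ * p y| |p1 y| := le_max_right _ _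
    have hm0 : (0:ℝ) ≤ max |κ * p y| |p1 y| := le_trans (abs_nonneg _) hm2
    apply max_le
    · rw [ek1, hK_def]
      have h1 : κ * |p1 y| ≤ κ * max |κ * p y| |p1 y| :=
        mul_le_mul_of_nonneg_left hm2 hκ.le
      have h2 : (0:ℝ) ≤ M * max |κ * p y| |p1 y| := mul_nonneg hM0 hm0
      linarith
    · rw [hode' y hys, hK_def]
      have tri : |2 * (U1 y / U y) * p1 y + κ ^ 2 * p y| ≤
          |2 * (U1 y / U y) * p1 y| + |κ ^ 2 * p y| := abs_add_le _ _
      have e1 : |2 * (U1 y / U y) * p1 y| = 2 * |U1 y / U y| * |p1 y| := by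
        rw [abs_mul, abs_mul]; norm_num
      have e2 : |κ ^ 2 * p y| = κ * |κ * p y| := by
        rw [abs_mul, abs_mul, abs_of_pos hκ, abs_of_pos (pow_pos hκ 2)]; ring
      have h1 : |U1 y / U y| * |p1 y| ≤ M * max |κ * p y| |p1 y| :=
        mul_le_mul hCy hm2 (abs_nonneg _) hM0
      have h2 : κ * |κ * p y| ≤ κ * max |κ * p y| |p1 y| :=
        mul_le_mul_of_nonneg_left hm1 hκ.le
      linarith
  have hgron := norm_le_gronwallBound_of_norm_deriv_right_le hvc hv' ha hbound
  have hpz : ∀ y ∈ Set.Icc x 0, p y = 0 := by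
    intro y hy
    have h1 := hgron y hy
    rw [gronwallBound_ε0_δ0] at h1
    have h2 : ‖v y‖ = 0 := le_antisymm h1 (norm_nonneg _)
    have h3 : v y = 0 := norm_eq_zero.mp h2
    have h4 : κ * p y = 0 := congrArg Prod.fst h3
    exact (mul_eq_zero.mp h4).resolve_left hκ.ne'
  -- contradiction with p x₀ ≠ 0
  rcases le_total x₀ x with hle | hle
  · exact hx₀ (aux_zero_closure hdx ⟨hx₀s.1, hle⟩ hsub (hpc x₀ hx₀s)
      (fun y hy => (hzero y hy).1))
  · exact hx₀ (hpz x₀ ⟨hle, hx₀s.2⟩)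
end

section
/- Let d > 0, let U ∈ C¹([−d,0];ℝ) be nonvanishing, and let κ > 0. If q ∈ C¹([−d,0];ℝ) satisfies the Riccati equation q′ = 2(U′/U)q + κ² − q² on [−d,0] with q(−d) = 0, then q(x₃) > 0 for every x₃ ∈ (−d,0]. -/
open Topology Filter

/-- The solution of the Riccati problem
`q′ = 2(U′/U)q + κ² − q²`, `q(−d) = 0`, is strictly positive on `(−d,0]`. -/
theorem stmt_6 (d : ℝ) (hd : 0 < d) (U q : ℝ → ℝ) (κ : ℝ) (hκ : 0 < κ)
    (hU : ContDiffOn ℝ 1 U (Set.Icc (-d) 0))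
    (hU0 : ∀ t ∈ Set.Icc (-d) 0, U t ≠ 0)
    (hq : ContDiffOn ℝ 1 q (Set.Icc (-d) 0))
    (hode : ∀ x ∈ Set.Icc (-d) 0,
      derivWithin q (Set.Icc (-d) 0) x
        = 2 * (derivWithin U (Set.Icc (-d) 0) x / U x) * q x + κ ^ 2 - (q x) ^ 2)
    (hq0 : q (-d) = 0) :
    ∀ x ∈ Set.Ioc (-d) 0, 0 < q x := by
  set a : ℝ := -d with ha
  have ha0 : a < 0 := by simp [ha]; linarith
  have hκ2 : (0:ℝ) < κ ^ 2 := by positivity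
  -- derivative is κ² at any zero of q
  have key : ∀ x ∈ Set.Icc a 0, q x = 0 → HasDerivWithinAt q (κ ^ 2) (Set.Icc a 0) x := by
    intro x hx hqx
    have hdiff := (hq.differentiableOn one_ne_zero) x hx
    have := hdiff.hasDerivWithinAt
    rw [hode x hx] at this
    rw [hqx] at this
    exact this.congr_deriv (by ring)
  by_contra hcon
  push_neg at hcon
  obtain ⟨y, hy, hqy⟩ := hcon
  set S : Set ℝ := {x | x ∈ Set.Ioc a 0 ∧ q x ≤ 0} with hS
  have hSne : S.Nonempty := ⟨y, hy, hqy⟩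
  have hSbd : BddBelow S := ⟨a, fun x hx => le_of_lt hx.1.1⟩
  set x₀ := sInf S with hx₀def
  have hx₀cl : x₀ ∈ closure S := csInf_mem_closure hSne hSbd
  have hSsub : S ⊆ Set.Icc a 0 := fun x hx => ⟨le_of_lt hx.1.1, hx.1.2⟩
  have hx₀mem : x₀ ∈ Set.Icc a 0 := by
    have := closure_mono hSsub hx₀cl
    rwa [isClosed_Icc.closure_eq] at this
  -- x₀ > a
  have hax₀ : a < x₀ := by
    rcases lt_or_eq_of_le hx₀mem.1 with h | h
    · exact h
    exfalso
    have hder := key a ⟨le_rfl, le_of_lt ha0⟩ hq0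
    rw [hasDerivWithinAt_iff_tendsto_slope] at hder
    have hne : (𝓝[S] a).NeBot := by
      apply mem_closure_iff_nhdsWithin_neBot.mp
      rwa [h]
    have hle : 𝓝[S] a ≤ 𝓝[Set.Icc a 0 \ {a}] a :=
      nhdsWithin_mono _ (fun x hx => ⟨hSsub hx, by
        simp only [Set.mem_singleton_iff]; exact ne_of_gt hx.1.1⟩)
    have h1 : ∀ᶠ x in 𝓝[S] a, 0 < slope q a x :=
      (hder.mono_left hle).eventually (eventually_gt_nhds hκ2)
    have h2 : ∀ᶠ x in 𝓝[S] a, x ∈ S := eventually_mem_nhdsWithin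
    obtain ⟨x, hx1, hx2⟩ := (h1.and h2).exists
    have hxa : a < x := hx2.1.1
    have : slope q a x ≤ 0 := by
      rw [slope_def_field, hq0]
      apply div_nonpos_of_nonpos_of_nonneg
      · linarith [hx2.2]
      · linarith
    linarith
  have hx₀0 : x₀ ≤ 0 := hx₀mem.2
  -- q positive on Ioo a x₀
  have hpos : ∀ x ∈ Set.Ioo a x₀, 0 < q x := by
    intro x hx
    by_contra hxn
    push_neg at hxn
    have : x ∈ S := ⟨⟨hx.1, le_trans (le_of_lt hx.2) hx₀0⟩, hxn⟩
    exact absurd (csInf_le hSbd this) (not_le.mpr hx.2)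
  have hneIoo : (𝓝[Set.Ioo a x₀] x₀).NeBot := right_nhdsWithin_Ioo_neBot hax₀
  -- q x₀ = 0
  have hq₀le : q x₀ ≤ 0 := by
    have hne : (𝓝[S] x₀).NeBot := mem_closure_iff_nhdsWithin_neBot.mp hx₀cl
    have hc : ContinuousWithinAt q S x₀ := (hq.continuousOn x₀ hx₀mem).mono hSsub
    refine le_of_tendsto hc ?_
    filter_upwards [eventually_mem_nhdsWithin] with x hx using hx.2
  have hq₀ge : 0 ≤ q x₀ := by
    have hc : ContinuousWithinAt q (Set.Ioo a x₀) x₀ :=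
      (hq.continuousOn x₀ hx₀mem).mono (fun x hx => ⟨le_of_lt hx.1, le_trans (le_of_lt hx.2) hx₀0⟩)
    refine ge_of_tendsto hc ?_
    filter_upwards [eventually_mem_nhdsWithin] with x hx using le_of_lt (hpos x hx)
  have hq₀ : q x₀ = 0 := le_antisymm hq₀le hq₀ge
  -- derivative at x₀
  have hder := key x₀ hx₀mem hq₀
  rw [hasDerivWithinAt_iff_tendsto_slope] at hder
  have hle : 𝓝[Set.Ioo a x₀] x₀ ≤ 𝓝[Set.Icc a 0 \ {x₀}] x₀ :=
    nhdsWithin_mono _ (fun x hx => ⟨⟨le_of_lt hx.1, le_trans (le_of_lt hx.2) hx₀0⟩, by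
      simp only [Set.mem_singleton_iff]; exact ne_of_lt hx.2⟩)
  have hlim := hder.mono_left hle
  have hslope : ∀ᶠ x in 𝓝[Set.Ioo a x₀] x₀, slope q x₀ x ≤ 0 := by
    filter_upwards [eventually_mem_nhdsWithin] with x hx
    rw [slope_def_field, hq₀]
    apply div_nonpos_of_nonneg_of_nonpos
    · linarith [hpos x hx]
    · linarith [hx.2]
  have : κ ^ 2 ≤ 0 := le_of_tendsto hlim hslope
  linarith
end

section
/- Let d > 0 and let U ∈ C¹([−d,0];ℝ) be nonvanishing. For every κ > 0 there exists exactly one q ∈ C¹([−d,0];ℝ) satisfying the Riccati equation q′ = 2(U′/U)q + κ² − q² on all of [−d,0] with q(−d) = 0; i.e. the solution of this initial value problem does not blow up before x₃ = 0, and it is unique. -/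
open Set Filter Topology

set_option maxHeartbeats 1000000

namespace Stmt7


/-- A priori bounds for a solution of the Riccati equation on a subinterval `[-d, c]`:
via `p = q/U²`, we get `0 ≤ q` and `q ≤ (κ²/m²)·d·MU²`. -/
lemma apriori (d : ℝ) (hd : 0 < d) (U : ℝ → ℝ) (κ : ℝ)
    (hU : ContDiffOn ℝ 1 U (Icc (-d) 0)) (hU0 : ∀ t ∈ Icc (-d) 0, U t ≠ 0)
    {m MU : ℝ} (hm : 0 < m) (hκ : 0 < κ)
    (hmU : ∀ t ∈ Icc (-d) 0, m ≤ |U t|) (hUM : ∀ t ∈ Icc (-d) 0, |U t| ≤ MU)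
    {c : ℝ} (hc : c ∈ Icc (-d) 0) {q : ℝ → ℝ}
    (hqc : ContinuousOn q (Icc (-d) c))
    (hq : ∀ t ∈ Icc (-d) c, HasDerivWithinAt q
      (2 * (derivWithin U (Icc (-d) 0) t / U t) * q t + κ ^ 2 - (q t) ^ 2) (Icc (-d) c) t)
    (hq0 : q (-d) = 0) :
    ∀ t ∈ Icc (-d) c, 0 ≤ q t ∧ q t ≤ κ ^ 2 / m ^ 2 * d * MU ^ 2 := by
  have hdc : -d ≤ c := hc.1
  have hJS : Icc (-d) c ⊆ Icc (-d) 0 := Icc_subset_Icc le_rfl hc.2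
  set S := Icc (-d) 0 with hSdef
  set J := Icc (-d) c with hJdef
  set p : ℝ → ℝ := fun t => q t / (U t) ^ 2 with hpdef
  have hUc : ContinuousOn U S := hU.continuousOn
  have hpc : ContinuousOn p J :=
    hqc.div ((hUc.mono hJS).pow 2) (fun t ht => pow_ne_zero 2 (hU0 t (hJS ht)))
  have hUd : ∀ t ∈ J, HasDerivWithinAt U (derivWithin U S t) J t := fun t ht =>
    (((hU.differentiableOn one_ne_zero) t (hJS ht)).hasDerivWithinAt).mono hJS
  -- derivative of p
  have hp : ∀ t ∈ J, HasDerivWithinAt p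
      (κ ^ 2 / (U t) ^ 2 - (U t) ^ 2 * (p t) ^ 2) J t := by
    intro t ht
    have hUt : U t ≠ 0 := hU0 t (hJS ht)
    have h2 : HasDerivWithinAt (fun s => (U s) ^ 2)
        ((2 : ℕ) * (U t) ^ 1 * derivWithin U S t) J t := (hUd t ht).pow 2
    have hdiv := (hq t ht).div h2 (pow_ne_zero 2 hUt)
    convert hdiv using 1
    · rfl
    · rfl
    · rfl
    simp only [hpdef]
    field_simp
    ring
  -- upper bound for p
  have hB : (0:ℝ) < κ ^ 2 / m ^ 2 := by positivity
  set B : ℝ := κ ^ 2 / m ^ 2 with hBdef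
  have hpB : ∀ t ∈ J, ∀ hUt : U t ≠ 0,
      κ ^ 2 / (U t) ^ 2 - (U t) ^ 2 * (p t) ^ 2 ≤ B := by
    intro t ht hUt
    have hm2 : m ^ 2 ≤ (U t) ^ 2 := by
      have h1 := hmU t (hJS ht)
      nlinarith [abs_nonneg (U t), sq_abs (U t)]
    have : κ ^ 2 / (U t) ^ 2 ≤ κ ^ 2 / m ^ 2 :=
      div_le_div_of_nonneg_left (by positivity) (by positivity) hm2
    nlinarith [sq_nonneg (U t * p t), sq_nonneg (U t), sq_nonneg (p t)]
  have hupper : ∀ t ∈ J, p t ≤ B * (t + d) := by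
    intro t ht
    have hmono : MonotoneOn (fun t => B * (t + d) - p t) J := by
      apply monotoneOn_of_hasDerivWithinAt_nonneg (convex_Icc _ _)
        (Continuous.continuousOn (by continuity) |>.sub hpc)
        (f' := fun t => B - (κ ^ 2 / (U t) ^ 2 - (U t) ^ 2 * (p t) ^ 2))
      · intro x hx
        rw [interior_Icc] at hx
        have hxJ : x ∈ J := Ioo_subset_Icc_self hx
        have h1 : HasDerivWithinAt (fun t => B * (t + d)) (B * 1) (Ioo (-d) c) x :=
          (((hasDerivAt_id x).add_const d).const_mul B).hasDerivWithinAt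
        simpa using h1.sub ((hp x hxJ).mono Ioo_subset_Icc_self)
      · intro x hx
        rw [interior_Icc] at hx
        have hxJ : x ∈ J := Ioo_subset_Icc_self hx
        have := hpB x hxJ (hU0 x (hJS hxJ))
        linarith
    have h0 : (-d : ℝ) ∈ J := left_mem_Icc.mpr hdc
    have := hmono h0 ht ht.1
    have hpd : p (-d) = 0 := by simp [hpdef, hq0]
    simp only [hpd] at this
    linarith
  -- lower bound: p ≥ 0 on J
  have hMU0 : 0 < MU := lt_of_lt_of_le hm (le_trans (hmU (-d) (by constructor <;> linarith))
    (hUM (-d) (by constructor <;> linarith)))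
  have hδ : (0:ℝ) < κ / MU ^ 2 := by positivity
  set δ : ℝ := κ / MU ^ 2 with hδdef
  -- positivity of p' where |p| is small
  have hpos : ∀ s ∈ J, |p s| < δ / 2 → 0 < κ ^ 2 / (U s) ^ 2 - (U s) ^ 2 * (p s) ^ 2 := by
    intro s hs habs
    have hUs2 : (0:ℝ) < (U s) ^ 2 := by
      have := hU0 s (hJS hs); positivity
    have hUsM : (U s) ^ 2 ≤ MU ^ 2 := by
      have := hUM s (hJS hs)
      nlinarith [abs_nonneg (U s), sq_abs (U s)]
    have h1 : κ ^ 2 / MU ^ 2 ≤ κ ^ 2 / (U s) ^ 2 :=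
      div_le_div_of_nonneg_left (by positivity) hUs2 hUsM
    have h2 : (U s) ^ 2 * (p s) ^ 2 ≤ MU ^ 2 * (δ / 2) ^ 2 := by
      have hps : (p s) ^ 2 ≤ (δ / 2) ^ 2 := by
        have hab := abs_lt.mp habs
        exact sq_le_sq' (by linarith [hab.1]) hab.2.le
      have := mul_le_mul hUsM hps (by positivity) (by positivity)
      linarith
    have h3 : MU ^ 2 * (δ / 2) ^ 2 = κ ^ 2 / MU ^ 2 / 4 := by
      rw [hδdef]; field_simp; ring
    have h4 : (0:ℝ) < κ ^ 2 / MU ^ 2 := by positivity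
    linarith
  have hlower : ∀ t ∈ J, 0 ≤ p t := by
    by_contra hcon
    push_neg at hcon
    obtain ⟨t₁, ht₁, hpt₁⟩ := hcon
    have hKJ : Icc (-d) t₁ ⊆ J := Icc_subset_Icc le_rfl ht₁.2
    set Sset : Set ℝ := {t ∈ Icc (-d) t₁ | 0 ≤ p t} with hSsetdef
    have hclosed : IsClosed Sset := by
      have : Sset = Icc (-d) t₁ ∩ p ⁻¹' (Ici 0) := by
        ext x; simp [hSsetdef, and_comm]
      rw [this]
      exact ContinuousOn.preimage_isClosed_of_isClosed (hpc.mono hKJ) isClosed_Icc isClosed_Ici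
    have hne : Sset.Nonempty := ⟨-d, ⟨left_mem_Icc.mpr ht₁.1, by simp [hpdef, hq0]⟩⟩
    have hbdd : BddAbove Sset := (bddAbove_Icc (a := -d) (b := t₁)).mono
      (fun x hx => hx.1)
    set t₀ : ℝ := sSup Sset with ht₀def
    have ht₀mem : t₀ ∈ Sset := hclosed.csSup_mem hne hbdd
    have ht₀J : t₀ ∈ J := hKJ ht₀mem.1
    have ht₀p : 0 ≤ p t₀ := ht₀mem.2
    have ht₀lt : t₀ < t₁ := lt_of_le_of_ne ht₀mem.1.2 (by
      intro h; rw [h] at ht₀p; linarith)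
    have hneg : ∀ s, t₀ < s → s ≤ t₁ → p s < 0 := by
      intro s h1 h2
      by_contra h
      push_neg at h
      have hms : s ∈ Sset := ⟨⟨le_trans ht₀mem.1.1 (le_of_lt h1), h2⟩, h⟩
      exact absurd (le_csSup hbdd hms) (not_le.mpr h1)
    -- p t₀ = 0
    have hpt₀le : p t₀ ≤ 0 := by
      have hcw : ContinuousWithinAt p (Ioc t₀ t₁) t₀ :=
        (hpc.continuousWithinAt ht₀J).mono (fun x hx => ⟨le_trans ht₀J.1 hx.1.le,
          le_trans hx.2 (ht₁.2)⟩)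
      have hnb : (𝓝[Ioc t₀ t₁] t₀).NeBot := by
        rw [← mem_closure_iff_nhdsWithin_neBot, closure_Ioc ht₀lt.ne]
        exact left_mem_Icc.mpr ht₀lt.le
      refine le_of_tendsto hcw ?_
      filter_upwards [self_mem_nhdsWithin] with s hs
      exact (hneg s hs.1 hs.2).le
    have hpt₀ : p t₀ = 0 := le_antisymm hpt₀le ht₀p
    -- smallness of p near t₀
    have hev : ∀ᶠ s in 𝓝[J] t₀, |p s| < δ / 2 := by
      have hcw : ContinuousWithinAt p J t₀ := hpc.continuousWithinAt ht₀J
      have : ∀ᶠ y in 𝓝 (p t₀), |y| < δ / 2 := by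
        rw [hpt₀]
        have := eventually_abs_sub_lt (0:ℝ) (by positivity : (0:ℝ) < δ / 2)
        simpa using this
      exact hcw.eventually this
    obtain ⟨ε, hε, hball⟩ := Metric.mem_nhdsWithin_iff.mp hev
    set t₂ : ℝ := min t₁ (t₀ + ε / 2) with ht₂def
    have ht₀t₂ : t₀ < t₂ := lt_min ht₀lt (by linarith)
    have ht₂t₁ : t₂ ≤ t₁ := min_le_left _ _
    have hK2J : Icc t₀ t₂ ⊆ J := fun s hs => ⟨le_trans ht₀J.1 hs.1,
      le_trans (le_trans hs.2 ht₂t₁) ht₁.2⟩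
    have hsmall : ∀ s ∈ Icc t₀ t₂, |p s| < δ / 2 := by
      intro s hs
      apply hball
      constructor
      · rw [Metric.mem_ball, Real.dist_eq, abs_sub_lt_iff]
        constructor
        · have : s ≤ t₀ + ε / 2 := le_trans hs.2 (min_le_right _ _)
          linarith
        · linarith [hs.1]
      · exact hK2J hs
    have hmono : StrictMonoOn p (Icc t₀ t₂) := by
      apply strictMonoOn_of_hasDerivWithinAt_pos (convex_Icc _ _) (hpc.mono hK2J)
        (f' := fun s => κ ^ 2 / (U s) ^ 2 - (U s) ^ 2 * (p s) ^ 2)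
      · intro x hx
        rw [interior_Icc] at hx ⊢
        exact (hp x (hK2J (Ioo_subset_Icc_self hx))).mono
          (fun s hs => hK2J (Ioo_subset_Icc_self hs))
      · intro x hx
        rw [interior_Icc] at hx
        have hxK : x ∈ Icc t₀ t₂ := Ioo_subset_Icc_self hx
        exact hpos x (hK2J hxK) (hsmall x hxK)
    have h1 : p t₀ < p t₂ := hmono (left_mem_Icc.mpr ht₀t₂.le)
      (right_mem_Icc.mpr ht₀t₂.le) ht₀t₂
    have h2 : p t₂ < 0 := hneg t₂ ht₀t₂ ht₂t₁
    rw [hpt₀] at h1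
    linarith
  -- conclude
  intro t ht
  have hUt : U t ≠ 0 := hU0 t (hJS ht)
  have hqp : q t = p t * (U t) ^ 2 := by simp only [hpdef]; field_simp
  have h1 : 0 ≤ p t := hlower t ht
  have h2 : p t ≤ B * (t + d) := hupper t ht
  have h3 : B * (t + d) ≤ B * d := by
    have : t + d ≤ d := by linarith [ht.2, hc.2]
    exact mul_le_mul_of_nonneg_left this hB.le
  have h4 : (U t) ^ 2 ≤ MU ^ 2 := by
    have := hUM t (hJS ht)
    nlinarith [abs_nonneg (U t), sq_abs (U t)]
  constructor
  · rw [hqp]; positivity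
  · rw [hqp]
    calc p t * (U t) ^ 2 ≤ (B * d) * MU ^ 2 := by
          apply mul_le_mul (by linarith) h4 (by positivity) (by positivity)
      _ = κ ^ 2 / m ^ 2 * d * MU ^ 2 := by rw [hBdef]


/-- Solution predicate on `[-d, c]`. -/
def SolOn (d : ℝ) (v : ℝ → ℝ → ℝ) (c : ℝ) (q : ℝ → ℝ) : Prop :=
  ContinuousOn q (Icc (-d) c) ∧
    (∀ t ∈ Icc (-d) c, HasDerivWithinAt q (v t (q t)) (Icc (-d) c) t) ∧ q (-d) = 0

/-- Gluing step: a solution on `[-d,c]` extends to `[-d, min 0 (c+ε)]` given a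
Picard–Lindelöf solution forward from `c`. -/
lemma glue (d c c' : ℝ) (v : ℝ → ℝ → ℝ) (q f : ℝ → ℝ)
    (hdc : -d ≤ c) (hcc' : c < c')
    (hq : SolOn d v c q)
    (hf0 : f c = q c)
    (hfd : ∀ t ∈ Icc c c', HasDerivWithinAt f (v t (f t)) (Icc c c') t) :
    SolOn d v c' (fun t => if t ≤ c then q t else f t) := by
  set Q : ℝ → ℝ := fun t => if t ≤ c then q t else f t with hQdef
  have hQq : ∀ s ∈ Icc (-d) c, Q s = q s := fun s hs => if_pos hs.2
  have hQf : ∀ s ∈ Icc c c', Q s = f s := by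
    intro s hs
    by_cases h : s ≤ c
    · have hsc : s = c := le_antisymm h hs.1
      subst hsc
      simp [hQdef, hf0]
    · simp [hQdef, if_neg h]
  have hIcc : Icc (-d) c ∪ Icc c c' = Icc (-d) c' := Icc_union_Icc_eq_Icc hdc hcc'.le
  have hQd : ∀ t ∈ Icc (-d) c', HasDerivWithinAt Q (v t (Q t)) (Icc (-d) c') t := by
    intro t ht
    rcases lt_trichotomy t c with hlt | heq | hgt
    · have htc : t ∈ Icc (-d) c := ⟨ht.1, hlt.le⟩
      have hmem : Icc (-d) c ∈ 𝓝[Icc (-d) c'] t :=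
        mem_nhdsWithin.mpr ⟨Iio c, isOpen_Iio, hlt,
          fun s hs => ⟨hs.2.1, hs.1.le⟩⟩
      have h1 := (hq.2.1 t htc).mono_of_mem_nhdsWithin hmem
      have hev : Q =ᶠ[𝓝[Icc (-d) c'] t] q := by
        filter_upwards [hmem] with s hs using hQq s hs
      have hQt : Q t = q t := hQq t htc
      rw [hQt]
      exact h1.congr_of_eventuallyEq hev hQt
    · subst heq
      have htc : t ∈ Icc (-d) t := ⟨ht.1, le_rfl⟩
      have hl : HasDerivWithinAt Q (v t (q t)) (Icc (-d) t) t :=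
        (hq.2.1 t htc).congr hQq (hQq t htc)
      have hr : HasDerivWithinAt Q (v t (q t)) (Icc t c') t := by
        have := hfd t (left_mem_Icc.mpr hcc'.le)
        rw [hf0] at this
        exact this.congr hQf (hQf t (left_mem_Icc.mpr hcc'.le))
      have := hl.union hr
      rw [hIcc] at this
      have hQt : Q t = q t := hQq t htc
      rw [hQt]
      exact this
    · have htc : t ∈ Icc c c' := ⟨hgt.le, ht.2⟩
      have hmem : Icc c c' ∈ 𝓝[Icc (-d) c'] t :=
        mem_nhdsWithin.mpr ⟨Ioi c, isOpen_Ioi, hgt,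
          fun s hs => ⟨hs.1.le, hs.2.2⟩⟩
      have h1 := (hfd t htc).mono_of_mem_nhdsWithin hmem
      have hev : Q =ᶠ[𝓝[Icc (-d) c'] t] f := by
        filter_upwards [hmem] with s hs using hQf s hs
      have hQt : Q t = f t := hQf t htc
      rw [hQt]
      exact h1.congr_of_eventuallyEq hev hQt
  refine ⟨fun t ht => (hQd t ht).continuousWithinAt, hQd, ?_⟩
  have : Q (-d) = q (-d) := hQq (-d) ⟨le_rfl, hdc⟩
  rw [this, hq.2.2]



/-- Global existence for the Riccati IVP. -/
lemma exists_sol (d : ℝ) (hd : 0 < d) (U : ℝ → ℝ) (κ : ℝ) (hκ : 0 < κ)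
    (hU : ContDiffOn ℝ 1 U (Icc (-d) 0)) (hU0 : ∀ t ∈ Icc (-d) 0, U t ≠ 0)
    {Am M : ℝ} (hAm0 : 0 ≤ Am)
    (hAm : ∀ t ∈ Icc (-d) 0, |derivWithin U (Icc (-d) 0) t / U t| ≤ Am)
    (hM0 : 0 ≤ M)
    (hapriori : ∀ c ∈ Icc (-d) 0, ∀ q : ℝ → ℝ, SolOn d
        (fun t x => 2 * (derivWithin U (Icc (-d) 0) t / U t) * x + κ ^ 2 - x ^ 2) c q →
        ∀ t ∈ Icc (-d) c, 0 ≤ q t ∧ q t ≤ M) :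
    ∃ q : ℝ → ℝ, SolOn d
      (fun t x => 2 * (derivWithin U (Icc (-d) 0) t / U t) * x + κ ^ 2 - x ^ 2) 0 q := by
  set S : Set ℝ := Icc (-d) 0 with hSdef
  set A : ℝ → ℝ := fun t => derivWithin U (Icc (-d) 0) t / U t with hAdef
  set v : ℝ → ℝ → ℝ := fun t x => 2 * A t * x + κ ^ 2 - x ^ 2 with hvdef
  have hd0 : (-d : ℝ) < 0 := by linarith
  have hUniq : UniqueDiffOn ℝ S := uniqueDiffOn_Icc hd0
  have hAc : ContinuousOn A S :=
    (hU.continuousOn_derivWithin hUniq le_rfl).div hU.continuousOn hU0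
  set C : ℝ := 2 * Am * (M + 1) + κ ^ 2 + (M + 1) ^ 2 with hCdef
  have hC : 0 < C := by positivity
  set h : ℝ := 1 / C with hhdef
  have hh : 0 < h := by positivity
  set L : ℝ := 2 * Am + 2 * (M + 1) with hLdef
  have hL0 : 0 ≤ L := by positivity
  -- the Picard–Lindelöf extension step
  have hstep : ∀ c ∈ Ico (-d) (0:ℝ), (∃ q, SolOn d v c q) →
      ∃ q, SolOn d v (min 0 (c + h)) q := by
    intro c hc ⟨q, hq⟩
    have hcS : c ∈ S := ⟨hc.1, hc.2.le⟩
    have hbd := hapriori c hcS q hq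
    have hx₀ := hbd c (right_mem_Icc.mpr hc.1)
    set x₀ : ℝ := q c with hx₀def
    set c' : ℝ := min 0 (c + h) with hc'def
    have hcc' : c < c' := lt_min hc.2 (by linarith)
    have hc'0 : c' ≤ 0 := min_le_left _ _
    have hsub : Icc c c' ⊆ S := fun s hs => ⟨le_trans hc.1 hs.1, le_trans hs.2 hc'0⟩
    have habs : |x₀| ≤ M := abs_le.mpr ⟨by linarith [hx₀.1], hx₀.2⟩
    have hballbd : ∀ x ∈ Metric.closedBall x₀ 1, |x| ≤ M + 1 := by
      intro x hx
      rw [Metric.mem_closedBall, Real.dist_eq] at hx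
      have := abs_sub_abs_le_abs_sub x x₀
      linarith
    have hpl : IsPicardLindelof v (tmin := c) (tmax := c') ⟨c, left_mem_Icc.mpr hcc'.le⟩ x₀ 1 0
        (Real.toNNReal C) (Real.toNNReal L) := by
      constructor
      · intro t ht
        rw [lipschitzOnWith_iff_dist_le_mul]
        intro x hx y hy
        rw [Real.dist_eq, Real.dist_eq]
        have hAt : |A t| ≤ Am := hAm t (hsub ht)
        have hxb := hballbd x hx
        have hyb := hballbd y hy
        have heq : v t x - v t y = (2 * A t - (x + y)) * (x - y) := by
          simp only [hvdef]; ring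
        rw [heq, abs_mul]
        have h1 : |2 * A t - (x + y)| ≤ L := by
          have := abs_sub (2 * A t) (x + y)
          have h2 : |2 * A t| = 2 * |A t| := by rw [abs_mul, abs_two]
          have h3 : |x + y| ≤ |x| + |y| := abs_add_le x y
          calc |2 * A t - (x + y)| ≤ |2 * A t| + |x + y| := abs_sub _ _
            _ ≤ 2 * Am + (|x| + |y|) := by rw [h2]; gcongr
            _ ≤ L := by rw [hLdef]; linarith
        calc |2 * A t - (x + y)| * |x - y| ≤ L * |x - y| := by gcongr
          _ = (Real.toNNReal L : ℝ) * |x - y| := by rw [Real.coe_toNNReal L hL0]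
      · intro x _
        exact (((continuousOn_const.mul (hAc.mono hsub)).mul continuousOn_const).add
          continuousOn_const).sub continuousOn_const
      · intro t ht x hx
        rw [Real.coe_toNNReal C hC.le]
        rw [Real.norm_eq_abs]
        have hAt : |A t| ≤ Am := hAm t (hsub ht)
        have hxb := hballbd x hx
        have h1 : |2 * A t * x| ≤ 2 * Am * (M + 1) := by
          rw [abs_mul, abs_mul, abs_two]
          nlinarith [abs_nonneg (A t), abs_nonneg x]
        have h2 : |x ^ 2| ≤ (M + 1) ^ 2 := by
          rw [abs_pow]
          exact pow_le_pow_left₀ (abs_nonneg x) hxb 2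
        calc |2 * A t * x + κ ^ 2 - x ^ 2| = |2 * A t * x + κ ^ 2 + -(x ^ 2)| := by
              rw [sub_eq_add_neg]
          _ ≤ |2 * A t * x| + |κ ^ 2| + |-(x ^ 2)| := abs_add_three _ _ _
          _ = |2 * A t * x| + κ ^ 2 + |x ^ 2| := by rw [abs_neg, abs_of_nonneg (by positivity : (0:ℝ) ≤ κ ^ 2)]
          _ ≤ 2 * Am * (M + 1) + κ ^ 2 + (M + 1) ^ 2 := by linarith
          _ = C := by rw [hCdef]
      · rw [Real.coe_toNNReal C hC.le]
        simp only [NNReal.coe_one, NNReal.coe_zero, sub_zero]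
        have h1 : max (c' - c) (c - c) ≤ h := by
          apply max_le
          · have : c' ≤ c + h := min_le_right _ _
            linarith
          · linarith
        calc C * max (c' - c) (c - c) ≤ C * h := by gcongr
          _ = 1 := by rw [hhdef]; field_simp
    obtain ⟨f, hf0, hfd⟩ := hpl.exists_eq_forall_mem_Icc_hasDerivWithinAt₀
    exact ⟨_, glue d c c' v q f hc.1 hcc' hq hf0 hfd⟩
  -- induction
  have hsingle : ∀ (g : ℝ → ℝ) (y x : ℝ), HasDerivWithinAt g y {x} x := by
    intro g y x
    have hempty : HasDerivWithinAt g y (∅ : Set ℝ) x := by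
      rw [hasDerivWithinAt_iff_isLittleO, nhdsWithin_empty]
      apply Asymptotics.isLittleO_bot
    have : ({x} : Set ℝ) \ {x} = (∅ : Set ℝ) := Set.diff_self
    exact hasDerivWithinAt_diff_singleton.mp (by rw [this]; exact hempty)
  have hbase : ∃ q, SolOn d v (-d) q := by
    refine ⟨fun _ => 0, continuousOn_const, ?_, rfl⟩
    intro t ht
    rw [Icc_self] at ht ⊢
    rw [mem_singleton_iff] at ht
    subst ht
    exact hsingle _ _ _
  -- iterate
  have hind : ∀ k : ℕ, ∃ q, SolOn d v (min 0 (-d + k * h)) q := by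
    intro k
    induction k with
    | zero =>
      have : min (0:ℝ) (-d + (0:ℕ) * h) = -d := by
        rw [min_eq_right]
        · push_cast; ring
        · push_cast; linarith
      rw [this]
      exact hbase
    | succ k ih =>
      by_cases hk : -d + k * h < 0
      · have hmin : min (0:ℝ) (-d + k * h) = -d + k * h := min_eq_right hk.le
        set c : ℝ := -d + k * h with hcd
        have hcmem : c ∈ Ico (-d) (0:ℝ) := by
          constructor
          · have : (0:ℝ) ≤ k * h := by positivity
            linarith
          · exact hk
        have hstep' := hstep c hcmem (by rw [hmin] at ih; exact ih)
        have : c + h = -d + (k + 1 : ℕ) * h := by push_cast; ring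
        rw [this] at hstep'
        exact hstep'
      · push_neg at hk
        obtain ⟨q, hq⟩ := ih
        have h1 : min (0:ℝ) (-d + k * h) = 0 := min_eq_left hk
        have h2 : min (0:ℝ) (-d + (k + 1 : ℕ) * h) = 0 := by
          apply min_eq_left
          push_cast
          push_cast at hk
          nlinarith
        rw [h1] at hq
        rw [h2]
        exact ⟨q, hq⟩
  obtain ⟨n, hn⟩ := exists_nat_ge (d / h)
  have hn' : d ≤ n * h := by
    rw [div_le_iff₀ hh] at hn
    linarith
  obtain ⟨q, hq⟩ := hind n
  have : min (0:ℝ) (-d + n * h) = 0 := min_eq_left (by linarith)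
  rw [this] at hq
  exact ⟨q, hq⟩

/-- Uniqueness for the Riccati IVP on `[-d,0]`, via Grönwall. -/
lemma uniq (d : ℝ) (hd : 0 < d) (U : ℝ → ℝ) (κ : ℝ)
    (hU : ContDiffOn ℝ 1 U (Icc (-d) 0)) (hU0 : ∀ t ∈ Icc (-d) 0, U t ≠ 0)
    (q g : ℝ → ℝ)
    (hqc : ContinuousOn q (Icc (-d) 0))
    (hqd : ∀ t ∈ Icc (-d) 0, HasDerivWithinAt q
      (2 * (derivWithin U (Icc (-d) 0) t / U t) * q t + κ ^ 2 - q t ^ 2) (Icc (-d) 0) t)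
    (hq0 : q (-d) = 0)
    (hgc : ContinuousOn g (Icc (-d) 0))
    (hgd : ∀ t ∈ Icc (-d) 0, HasDerivWithinAt g
      (2 * (derivWithin U (Icc (-d) 0) t / U t) * g t + κ ^ 2 - g t ^ 2) (Icc (-d) 0) t)
    (hg0 : g (-d) = 0) :
    EqOn q g (Icc (-d) 0) := by
  set S : Set ℝ := Icc (-d) 0 with hSdef
  set A : ℝ → ℝ := fun t => derivWithin U (Icc (-d) 0) t / U t with hAdef
  set w : ℝ → ℝ → ℝ := fun t x => 2 * A t * x + κ ^ 2 - x ^ 2 with hwdef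
  have hd0 : (-d : ℝ) < 0 := by linarith
  have hUniq : UniqueDiffOn ℝ S := uniqueDiffOn_Icc hd0
  have hAc : ContinuousOn A S :=
    (hU.continuousOn_derivWithin hUniq le_rfl).div hU.continuousOn hU0
  obtain ⟨Am0, hAm0⟩ := isCompact_Icc.exists_bound_of_continuousOn hAc
  set Am : ℝ := max Am0 0 with hAmdef
  have hAm : ∀ t ∈ S, |A t| ≤ Am := fun t ht => le_trans (by
    rw [← Real.norm_eq_abs]; exact hAm0 t ht) (le_max_left _ _)
  have hAmn : 0 ≤ Am := le_max_right _ _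
  obtain ⟨M1, hM1⟩ := isCompact_Icc.exists_bound_of_continuousOn hqc
  obtain ⟨M2, hM2⟩ := isCompact_Icc.exists_bound_of_continuousOn hgc
  set Mb : ℝ := max M1 M2 with hMbdef
  have hMbq : ∀ t ∈ S, |q t| ≤ Mb := fun t ht => le_trans (by
    rw [← Real.norm_eq_abs]; exact hM1 t ht) (le_max_left _ _)
  have hMbg : ∀ t ∈ S, |g t| ≤ Mb := fun t ht => le_trans (by
    rw [← Real.norm_eq_abs]; exact hM2 t ht) (le_max_right _ _)
  have hMbn : 0 ≤ Mb := le_trans (abs_nonneg _) (hMbq (-d) ⟨le_rfl, hd0.le⟩)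
  set K : ℝ := 2 * Am + 2 * Mb with hKdef
  have hKn : 0 ≤ K := by positivity
  set sset : ℝ → Set ℝ := fun t => if t ∈ S then Metric.closedBall (0:ℝ) Mb else ∅
    with hssetdef
  have hv : ∀ t, LipschitzOnWith (Real.toNNReal K) (w t) (sset t) := by
    intro t
    by_cases htS : t ∈ S
    · simp only [hssetdef, if_pos htS]
      rw [lipschitzOnWith_iff_dist_le_mul]
      intro x hx y hy
      rw [Metric.mem_closedBall, Real.dist_eq, sub_zero] at hx hy
      rw [Real.dist_eq, Real.dist_eq]
      have hAt : |A t| ≤ Am := hAm t htS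
      have heq : w t x - w t y = (2 * A t - (x + y)) * (x - y) := by
        simp only [hwdef]; ring
      rw [heq, abs_mul]
      have h1 : |2 * A t - (x + y)| ≤ K := by
        calc |2 * A t - (x + y)| ≤ |2 * A t| + |x + y| := abs_sub _ _
          _ ≤ 2 * Am + (|x| + |y|) := by
              rw [abs_mul, abs_two]
              have := abs_add_le x y
              gcongr
          _ ≤ K := by rw [hKdef]; linarith
      calc |2 * A t - (x + y)| * |x - y| ≤ K * |x - y| := by gcongr
        _ = (Real.toNNReal K : ℝ) * |x - y| := by rw [Real.coe_toNNReal K hKn]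
    · simp only [hssetdef, if_neg htS]
      exact lipschitzOnWith_empty _ _
  have key := ODE_solution_unique_of_mem_Icc_right (v := w) (s := sset)
    (K := Real.toNNReal K) (f := q) (g := g) (a := -d) (b := 0) (fun t _ => hv t) hqc
    (fun t ht => by
      have hmem : S ∈ 𝓝[Ici t] t :=
        mem_nhdsWithin.mpr ⟨Iio 0, isOpen_Iio, ht.2, fun s hs => ⟨le_trans ht.1 hs.2, hs.1.le⟩⟩
      exact (hqd t ⟨ht.1, ht.2.le⟩).mono_of_mem_nhdsWithin hmem)
    (fun t ht => by
      have htS : t ∈ S := ⟨ht.1, ht.2.le⟩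
      simp only [hssetdef, if_pos htS, Metric.mem_closedBall, Real.dist_eq, sub_zero]
      exact hMbq t htS)
    hgc
    (fun t ht => by
      have hmem : S ∈ 𝓝[Ici t] t :=
        mem_nhdsWithin.mpr ⟨Iio 0, isOpen_Iio, ht.2, fun s hs => ⟨le_trans ht.1 hs.2, hs.1.le⟩⟩
      exact (hgd t ⟨ht.1, ht.2.le⟩).mono_of_mem_nhdsWithin hmem)
    (fun t ht => by
      have htS : t ∈ S := ⟨ht.1, ht.2.le⟩
      simp only [hssetdef, if_pos htS, Metric.mem_closedBall, Real.dist_eq, sub_zero]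
      exact hMbg t htS)
    (by rw [hq0, hg0])
  exact key

end Stmt7

/-- The Riccati initial value problem `q′ = 2(U′/U)q + κ² − q²`,
`q(−d) = 0`, has exactly one solution on all of `[−d,0]`: a solution exists
(no blow-up before `x₃ = 0`) and any two solutions agree on `[−d,0]`. -/
theorem stmt_7 (d : ℝ) (hd : 0 < d) (U : ℝ → ℝ) (κ : ℝ) (hκ : 0 < κ)
    (hU : ContDiffOn ℝ 1 U (Set.Icc (-d) 0))
    (hU0 : ∀ t ∈ Set.Icc (-d) 0, U t ≠ 0) :
    ∃ q : ℝ → ℝ,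
      (ContDiffOn ℝ 1 q (Set.Icc (-d) 0) ∧
        (∀ x ∈ Set.Icc (-d) 0,
          derivWithin q (Set.Icc (-d) 0) x
            = 2 * (derivWithin U (Set.Icc (-d) 0) x / U x) * q x + κ ^ 2 - (q x) ^ 2) ∧
        q (-d) = 0) ∧
      (∀ q' : ℝ → ℝ,
        (ContDiffOn ℝ 1 q' (Set.Icc (-d) 0) ∧
          (∀ x ∈ Set.Icc (-d) 0,
            derivWithin q' (Set.Icc (-d) 0) x
              = 2 * (derivWithin U (Set.Icc (-d) 0) x / U x) * q' x + κ ^ 2 - (q' x) ^ 2) ∧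
          q' (-d) = 0) →
        ∀ x ∈ Set.Icc (-d) 0, q' x = q x) := by
  have hd0 : (-d : ℝ) < 0 := by linarith
  have hSne : (Set.Icc (-d) 0).Nonempty := ⟨-d, Set.left_mem_Icc.mpr hd0.le⟩
  have hUniq : UniqueDiffOn ℝ (Set.Icc (-d) 0) := uniqueDiffOn_Icc hd0
  have hAc : ContinuousOn (fun t => derivWithin U (Set.Icc (-d) 0) t / U t) (Set.Icc (-d) 0) :=
    (hU.continuousOn_derivWithin hUniq le_rfl).div hU.continuousOn hU0
  -- bounds
  obtain ⟨tm, htm, hminU⟩ := isCompact_Icc.exists_isMinOn hSne (hU.continuousOn.abs)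
  have hm : 0 < |U tm| := abs_pos.mpr (hU0 tm htm)
  have hmU : ∀ t ∈ Set.Icc (-d) 0, |U tm| ≤ |U t| := fun t ht => hminU ht
  obtain ⟨MU, hMU'⟩ := isCompact_Icc.exists_bound_of_continuousOn hU.continuousOn
  have hMU : ∀ t ∈ Set.Icc (-d) 0, |U t| ≤ MU := fun t ht => by
    rw [← Real.norm_eq_abs]; exact hMU' t ht
  obtain ⟨Am0, hAm0⟩ := isCompact_Icc.exists_bound_of_continuousOn hAc
  have hAm : ∀ t ∈ Set.Icc (-d) 0, |derivWithin U (Set.Icc (-d) 0) t / U t| ≤ max Am0 0 :=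
    fun t ht => le_trans (by rw [← Real.norm_eq_abs]; exact hAm0 t ht) (le_max_left _ _)
  have hM0 : (0:ℝ) ≤ κ ^ 2 / |U tm| ^ 2 * d * MU ^ 2 := by positivity
  -- existence
  obtain ⟨q, hq⟩ := Stmt7.exists_sol d hd U κ hκ hU hU0 (le_max_right Am0 0) hAm hM0
    (fun c hc q hq => Stmt7.apriori d hd U κ hU hU0 hm hκ hmU hMU hc hq.1 hq.2.1 hq.2.2)
  have hqc : ContinuousOn q (Set.Icc (-d) 0) := hq.1
  have hqd : ∀ t ∈ Set.Icc (-d) 0, HasDerivWithinAt q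
      (2 * (derivWithin U (Set.Icc (-d) 0) t / U t) * q t + κ ^ 2 - q t ^ 2)
      (Set.Icc (-d) 0) t := hq.2.1
  have hq0 : q (-d) = 0 := hq.2.2
  have hderiv_eq : ∀ x ∈ Set.Icc (-d) 0, derivWithin q (Set.Icc (-d) 0) x
      = 2 * (derivWithin U (Set.Icc (-d) 0) x / U x) * q x + κ ^ 2 - (q x) ^ 2 :=
    fun x hx => (hqd x hx).derivWithin (hUniq x hx)
  have hdiff : DifferentiableOn ℝ q (Set.Icc (-d) 0) :=
    fun x hx => (hqd x hx).differentiableWithinAt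
  have hcontd : ContinuousOn (derivWithin q (Set.Icc (-d) 0)) (Set.Icc (-d) 0) := by
    exact ContinuousOn.congr
      ((((continuousOn_const.mul hAc).mul hqc).add continuousOn_const).sub (hqc.pow 2))
      (fun x hx => hderiv_eq x hx)
  have hsmooth : ContDiffOn ℝ 1 q (Set.Icc (-d) 0) := by
    have := (contDiffOn_succ_iff_derivWithin (n := 0) hUniq).mpr
      ⟨hdiff, by simp, contDiffOn_zero.mpr hcontd⟩
    simpa using this
  refine ⟨q, ⟨hsmooth, hderiv_eq, hq0⟩, ?_⟩
  -- uniqueness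
  rintro q' ⟨hq'1, hq'2, hq'3⟩
  have hq'c : ContinuousOn q' (Set.Icc (-d) 0) := hq'1.continuousOn
  have hq'd : ∀ t ∈ Set.Icc (-d) 0, HasDerivWithinAt q'
      (2 * (derivWithin U (Set.Icc (-d) 0) t / U t) * q' t + κ ^ 2 - q' t ^ 2)
      (Set.Icc (-d) 0) t := by
    intro t ht
    have := ((hq'1.differentiableOn one_ne_zero) t ht).hasDerivWithinAt
    rwa [hq'2 t ht] at this
  exact Stmt7.uniq d hd U κ hU hU0 q' q hq'c hq'd hq'3 hqc hqd hq0
end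

section
/- Let d > 0, m ∈ ℝ, κ > 0, and set s = √(m² + κ²). Define l : [−d,0] → ℝ by l(x₃) = κ² tanh((x₃+d)s) / (s − m tanh((x₃+d)s)). Then the denominator s − m tanh((x₃+d)s) is strictly positive for all x₃ ∈ [−d,0], l(−d) = 0, and l satisfies the constant-coefficient Riccati equation l′ = 2m l + κ² − l² on [−d,0]. -/
private lemma tanh_hasDerivAt (u : ℝ) :
    HasDerivAt Real.tanh (1 - Real.tanh u ^ 2) u := by
  have hC : Real.cosh u ≠ 0 := (Real.cosh_pos u).ne'
  have h := (Real.hasDerivAt_sinh u).div (Real.hasDerivAt_cosh u) hC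
  have heq : (Real.cosh u * Real.cosh u - Real.sinh u * Real.sinh u) / Real.cosh u ^ 2
      = 1 - Real.tanh u ^ 2 := by
    rw [Real.tanh_eq_sinh_div_cosh]
    have h1 := Real.cosh_sq_sub_sinh_sq u
    field_simp
  rw [heq] at h
  exact h.congr_of_eventuallyEq (by filter_upwards with y; rw [Real.tanh_eq_sinh_div_cosh]; rfl)

/-- The explicit function
`l(x₃) = κ² tanh((x₃+d)s)/(s − m tanh((x₃+d)s))`, `s = √(m²+κ²)`, has positive
denominator on `[−d,0]`, vanishes at `−d`, and solves the constant-coefficient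
Riccati equation `l′ = 2ml + κ² − l²` on `[−d,0]`. -/
theorem stmt_9 (d m κ : ℝ) (hd : 0 < d) (hκ : 0 < κ)
    (s : ℝ) (hs : s = Real.sqrt (m ^ 2 + κ ^ 2))
    (l : ℝ → ℝ)
    (hl : ∀ x : ℝ,
      l x = κ ^ 2 * Real.tanh ((x + d) * s) / (s - m * Real.tanh ((x + d) * s))) :
    (∀ x ∈ Set.Icc (-d) 0, 0 < s - m * Real.tanh ((x + d) * s)) ∧
    l (-d) = 0 ∧
    (∀ x ∈ Set.Icc (-d) 0, deriv l x = 2 * m * l x + κ ^ 2 - (l x) ^ 2) := by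
  have hs2 : s ^ 2 = m ^ 2 + κ ^ 2 := by
    rw [hs, Real.sq_sqrt]; positivity
  have hspos : 0 < s := by
    rw [hs]; apply Real.sqrt_pos.2; positivity
  have hm2 : m ^ 2 < s ^ 2 := by nlinarith
  -- positivity of the denominator, for every x
  have hpos : ∀ x : ℝ, 0 < s - m * Real.tanh ((x + d) * s) := by
    intro x
    set u := (x + d) * s with hu
    have hC : 0 < Real.cosh u := Real.cosh_pos u
    have h1 : Real.cosh u ^ 2 - Real.sinh u ^ 2 = 1 := Real.cosh_sq_sub_sinh_sq u
    have hS2 : Real.sinh u ^ 2 < Real.cosh u ^ 2 := by nlinarith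
    have key : (m * Real.sinh u) ^ 2 < (s * Real.cosh u) ^ 2 := by nlinarith
    have hlt : m * Real.sinh u < s * Real.cosh u := by
      nlinarith [mul_pos hspos hC, sq_nonneg (s * Real.cosh u + m * Real.sinh u)]
    rw [Real.tanh_eq_sinh_div_cosh]
    rw [sub_pos]
    have : m * (Real.sinh u / Real.cosh u) = m * Real.sinh u / Real.cosh u := by ring
    rw [this, div_lt_iff₀ hC]
    linarith
  refine ⟨fun x _ => hpos x, ?_, ?_⟩
  · rw [hl]; simp
  · intro x _
    have hlf : l = fun y => κ ^ 2 * Real.tanh ((y + d) * s) /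
        (s - m * Real.tanh ((y + d) * s)) := funext hl
    set T := Real.tanh ((x + d) * s) with hT
    have hD : 0 < s - m * T := hpos x
    have haff : HasDerivAt (fun y : ℝ => (y + d) * s) (1 * s) x :=
      ((hasDerivAt_id x).add_const d).mul_const s
    have htanh : HasDerivAt (fun y : ℝ => Real.tanh ((y + d) * s))
        ((1 - T ^ 2) * (1 * s)) x := (tanh_hasDerivAt ((x + d) * s)).comp (h := fun y : ℝ => (y + d) * s) x haff
    have H1 : HasDerivAt (fun y : ℝ => κ ^ 2 * Real.tanh ((y + d) * s))
        (κ ^ 2 * ((1 - T ^ 2) * (1 * s))) x := htanh.const_mul _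
    have H2 : HasDerivAt (fun y : ℝ => s - m * Real.tanh ((y + d) * s))
        (0 - m * ((1 - T ^ 2) * (1 * s))) x :=
      (hasDerivAt_const x s).sub (htanh.const_mul m)
    have H := H1.fun_div H2 hD.ne'
    rw [hlf]
    rw [H.deriv]
    simp only [← hT]
    have hD' : s - m * T ≠ 0 := hD.ne'
    rw [div_eq_iff (pow_ne_zero 2 hD')]
    have hX : κ ^ 2 * T / (s - m * T) * (s - m * T) = κ ^ 2 * T := div_mul_cancel₀ _ hD'
    linear_combination (-(κ ^ 2 * T ^ 2)) * hs2 - (2 * m * (s - m * T) - (κ ^ 2 * T / (s - m * T) * (s - m * T) + κ ^ 2 * T)) * hX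
end

section
/- Let d > 0, let U ∈ C¹([−d,0];ℝ) be nonvanishing, let κ > 0, and let q ∈ C¹([−d,0];ℝ) satisfy q′ = 2(U′/U)q + κ² − q² on [−d,0] with q(−d) = 0. Set M = sup_{x₃∈[−d,0]} U′(x₃)/U(x₃) and S = √(M² + κ²). Then q(0) ≤ κ² tanh(d S) / (S − M tanh(d S)). -/
lemma aux_denom_pos {M S : ℝ} (hMS : |M| < S) (t : ℝ) :
    0 < S * Real.cosh t - M * Real.sinh t := by
  have h1 : |Real.sinh t| ≤ Real.cosh t := by
    have h2 := Real.cosh_sub_sinh t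
    have h3 := Real.cosh_add_sinh t
    have e1 := Real.exp_pos t
    have e2 := Real.exp_pos (-t)
    rw [abs_le]; constructor <;> nlinarith
  have hM := abs_nonneg M
  have hc := Real.cosh_pos t
  have h4 : |M * Real.sinh t| ≤ |M| * Real.cosh t := by
    rw [abs_mul]; exact mul_le_mul_of_nonneg_left h1 hM
  have h5 := abs_le.1 h4
  have h6 := le_abs_self M
  nlinarith [h5.1, h5.2]

lemma aux_B_deriv (M k2 S : ℝ) (hMS : |M| < S) (hSsq : S ^ 2 = M ^ 2 + k2) (x : ℝ) :
    HasDerivAt (fun t => k2 * Real.sinh (S * t) / (S * Real.cosh (S * t) - M * Real.sinh (S * t)))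
      (2 * M * (k2 * Real.sinh (S * x) / (S * Real.cosh (S * x) - M * Real.sinh (S * x))) + k2
        - (k2 * Real.sinh (S * x) / (S * Real.cosh (S * x) - M * Real.sinh (S * x))) ^ 2) x := by
  have hD := aux_denom_pos hMS (S * x)
  have hDne := ne_of_gt hD
  have hlin : HasDerivAt (fun t : ℝ => S * t) S x := by
    simpa using (hasDerivAt_id x).const_mul S
  have hs : HasDerivAt (fun t => Real.sinh (S * t)) (Real.cosh (S * x) * S) x :=
    (Real.hasDerivAt_sinh (S * x)).comp x hlin
  have hc : HasDerivAt (fun t => Real.cosh (S * t)) (Real.sinh (S * x) * S) x :=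
    (Real.hasDerivAt_cosh (S * x)).comp x hlin
  have hN : HasDerivAt (fun t => k2 * Real.sinh (S * t)) (k2 * (Real.cosh (S * x) * S)) x :=
    hs.const_mul k2
  have hDd : HasDerivAt (fun t => S * Real.cosh (S * t) - M * Real.sinh (S * t))
      (S * (Real.sinh (S * x) * S) - M * (Real.cosh (S * x) * S)) x :=
    (hc.const_mul S).sub (hs.const_mul M)
  have hq := hN.div hDd hDne
  have h1 := Real.cosh_sq_sub_sinh_sq (S * x)
  have hnum : k2 * (Real.cosh (S * x) * S) * (S * Real.cosh (S * x) - M * Real.sinh (S * x)) -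
      k2 * Real.sinh (S * x) * (S * (Real.sinh (S * x) * S) - M * (Real.cosh (S * x) * S))
      = k2 * S ^ 2 := by linear_combination (k2 * S ^ 2) * h1
  rw [hnum] at hq
  refine hq.congr_deriv ?_
  symm
  set s := Real.sinh (S * x)
  set c := Real.cosh (S * x)
  have step1 : 2 * M * (k2 * s / (S * c - M * s)) + k2 - (k2 * s / (S * c - M * s)) ^ 2
      = (2 * M * k2 * s * (S * c - M * s) + k2 * (S * c - M * s) ^ 2 - k2 ^ 2 * s ^ 2)
        / (S * c - M * s) ^ 2 := by
    field_simp
  rw [step1]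
  congr 1
  linear_combination (k2 * S ^ 2) * h1 + (k2 * s ^ 2) * hSsq

/-- Upper bound for `q(0)`: with `M = sup U′/U` and `S = √(M²+κ²)`,
the Riccati solution satisfies `q(0) ≤ κ² tanh(dS)/(S − M tanh(dS))`. -/
theorem stmt_11 (d : ℝ) (hd : 0 < d) (U q : ℝ → ℝ) (κ : ℝ) (hκ : 0 < κ)
    (hU : ContDiffOn ℝ 1 U (Set.Icc (-d) 0))
    (hU0 : ∀ t ∈ Set.Icc (-d) 0, U t ≠ 0)
    (hq : ContDiffOn ℝ 1 q (Set.Icc (-d) 0))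
    (hode : ∀ x ∈ Set.Icc (-d) 0,
      derivWithin q (Set.Icc (-d) 0) x
        = 2 * (derivWithin U (Set.Icc (-d) 0) x / U x) * q x + κ ^ 2 - (q x) ^ 2)
    (hq0 : q (-d) = 0)
    (M S : ℝ)
    (hM : M = sSup ((fun x => derivWithin U (Set.Icc (-d) 0) x / U x) '' Set.Icc (-d) 0))
    (hS : S = Real.sqrt (M ^ 2 + κ ^ 2)) :
    q 0 ≤ κ ^ 2 * Real.tanh (d * S) / (S - M * Real.tanh (d * S)) := by
  have hd0 : (-d : ℝ) < 0 := by linarith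
  have huniq : UniqueDiffOn ℝ (Set.Icc (-d) 0) := uniqueDiffOn_Icc hd0
  set r : ℝ → ℝ := fun x => derivWithin U (Set.Icc (-d) 0) x / U x with hr
  have hrc : ContinuousOn r (Set.Icc (-d) 0) :=
    (hU.continuousOn_derivWithin huniq le_rfl).div hU.continuousOn hU0
  have hbdd : BddAbove (r '' Set.Icc (-d) 0) :=
    (isCompact_Icc.image_of_continuousOn hrc).bddAbove
  have hMb : ∀ x ∈ Set.Icc (-d) 0, r x ≤ M := by
    intro x hx
    rw [hM]
    exact le_csSup hbdd (Set.mem_image_of_mem _ hx)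
  -- S properties
  have hMK : M ^ 2 + κ ^ 2 > 0 := by positivity
  have hMS : |M| < S := by
    rw [hS, ← Real.sqrt_sq_eq_abs]
    exact Real.sqrt_lt_sqrt (sq_nonneg M) (by nlinarith)
  have hSpos : 0 < S := lt_of_le_of_lt (abs_nonneg M) hMS
  have hSsq : S ^ 2 = M ^ 2 + κ ^ 2 := by
    rw [hS, Real.sq_sqrt hMK.le]
  -- key comparison for each ε > 0
  have key : ∀ ε > (0:ℝ), q 0 ≤
      (κ ^ 2 + ε) * Real.sinh (Real.sqrt (M ^ 2 + κ ^ 2 + ε) * d) /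
        (Real.sqrt (M ^ 2 + κ ^ 2 + ε) * Real.cosh (Real.sqrt (M ^ 2 + κ ^ 2 + ε) * d)
          - M * Real.sinh (Real.sqrt (M ^ 2 + κ ^ 2 + ε) * d)) := by
    intro ε hε
    set Sε := Real.sqrt (M ^ 2 + κ ^ 2 + ε) with hSε
    have hMKε : (0:ℝ) < M ^ 2 + κ ^ 2 + ε := by positivity
    have hMSε : |M| < Sε := by
      rw [hSε, ← Real.sqrt_sq_eq_abs]
      exact Real.sqrt_lt_sqrt (sq_nonneg M) (by nlinarith)
    have hSεsq : Sε ^ 2 = M ^ 2 + (κ ^ 2 + ε) := by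
      rw [hSε, Real.sq_sqrt hMKε.le]; ring
    have hSεpos : 0 < Sε := lt_of_le_of_lt (abs_nonneg M) hMSε
    set k2 := κ ^ 2 + ε with hk2
    set Bf : ℝ → ℝ := fun t =>
      k2 * Real.sinh (Sε * t) / (Sε * Real.cosh (Sε * t) - M * Real.sinh (Sε * t)) with hBf
    set B : ℝ → ℝ := fun x => Bf (x + d) with hB
    have hB' : ∀ x : ℝ, HasDerivAt B (2 * M * B x + k2 - (B x) ^ 2) x := by
      intro x
      have h1 := aux_B_deriv M k2 Sε hMSε hSεsq (x + d)
      have h2 : HasDerivAt (fun x : ℝ => x + d) 1 x := (hasDerivAt_id x).add_const d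
      have := h1.comp x h2
      exact this.congr_deriv (mul_one _)
    -- q right derivatives
    have hq' : ∀ x ∈ Set.Ico (-d) 0, HasDerivWithinAt q
        (2 * (r x) * q x + κ ^ 2 - (q x) ^ 2) (Set.Ici x) x := by
      intro x hx
      have hxI : x ∈ Set.Icc (-d) 0 := ⟨hx.1, hx.2.le⟩
      have h1 : HasDerivWithinAt q (derivWithin q (Set.Icc (-d) 0) x) (Set.Icc (-d) 0) x :=
        ((hq.differentiableOn one_ne_zero) x hxI).hasDerivWithinAt
      rw [hode x hxI] at h1
      refine h1.mono_of_mem_nhdsWithin ?_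
      rw [mem_nhdsWithin]
      exact ⟨Set.Ioo (-d - 1) 0, isOpen_Ioo, ⟨by linarith [hx.1], hx.2⟩,
        fun y hy => ⟨le_trans hx.1 hy.2, hy.1.2.le⟩⟩
    have hle : ∀ x ∈ Set.Icc (-d) 0, q x ≤ B x := by
      refine image_le_of_deriv_right_lt_deriv_boundary
        (hq.continuousOn) hq' ?_ hB' ?_
      · rw [hq0, hB]
        simp [hBf]
      · intro x hx hqx
        have hxI : x ∈ Set.Icc (-d) 0 := ⟨hx.1, hx.2.le⟩
        have hBx : 0 ≤ B x := by
          rw [hB]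
          have hxd : 0 ≤ x + d := by linarith [hx.1]
          have hD := aux_denom_pos hMSε (Sε * (x + d))
          have hsinh : 0 ≤ Real.sinh (Sε * (x + d)) :=
            Real.sinh_nonneg_iff.2 (by positivity)
          have hk2p : (0:ℝ) < k2 := by rw [hk2]; positivity
          exact div_nonneg (by positivity) hD.le
        have hq0x : 0 ≤ q x := hqx ▸ hBx
        have h1 : r x ≤ M := hMb x hxI
        rw [hqx]
        have : 2 * r x * B x ≤ 2 * M * B x := by nlinarith
        have hεp : κ ^ 2 < k2 := by rw [hk2]; linarith
        nlinarith
    have := hle 0 ⟨hd0.le, le_rfl⟩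
    rw [hB] at this
    simpa [hBf, mul_comm d Sε] using this
  -- take ε → 0⁺
  set F : ℝ → ℝ := fun ε =>
    (κ ^ 2 + ε) * Real.sinh (Real.sqrt (M ^ 2 + κ ^ 2 + ε) * d) /
      (Real.sqrt (M ^ 2 + κ ^ 2 + ε) * Real.cosh (Real.sqrt (M ^ 2 + κ ^ 2 + ε) * d)
        - M * Real.sinh (Real.sqrt (M ^ 2 + κ ^ 2 + ε) * d)) with hF
  have hF0 : F 0 = κ ^ 2 * Real.sinh (S * d) / (S * Real.cosh (S * d) - M * Real.sinh (S * d)) := by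
    rw [hF]
    simp [hS]
  have hcont : ContinuousAt F 0 := by
    have hden0 : S * Real.cosh (S * d) - M * Real.sinh (S * d) ≠ 0 :=
      (aux_denom_pos hMS (S * d)).ne'
    have h1 : Continuous fun ε : ℝ => Real.sqrt (M ^ 2 + κ ^ 2 + ε) :=
      Real.continuous_sqrt.comp (continuous_const.add continuous_id)
    have h2 : Continuous fun ε : ℝ => Real.sqrt (M ^ 2 + κ ^ 2 + ε) * d :=
      h1.mul continuous_const
    apply ContinuousAt.div
    · exact ((continuous_const.add continuous_id).mul (Real.continuous_sinh.comp h2)).continuousAt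
    · exact ((h1.mul (Real.continuous_cosh.comp h2)).sub
        (continuous_const.mul (Real.continuous_sinh.comp h2))).continuousAt
    · simpa [hS] using hden0
  have htend : Filter.Tendsto F (nhdsWithin 0 (Set.Ioi 0)) (nhds (F 0)) :=
    hcont.continuousWithinAt.tendsto
  have hq0F : q 0 ≤ F 0 := by
    refine ge_of_tendsto htend ?_
    filter_upwards [self_mem_nhdsWithin] with ε hε
    exact key ε hε
  rw [hF0] at hq0F
  -- convert sinh/cosh form to tanh form
  have hcosh : Real.cosh (S * d) ≠ 0 := (Real.cosh_pos _).ne'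
  have hgoal : κ ^ 2 * Real.tanh (d * S) / (S - M * Real.tanh (d * S))
      = κ ^ 2 * Real.sinh (S * d) / (S * Real.cosh (S * d) - M * Real.sinh (S * d)) := by
    have hden := aux_denom_pos hMS (S * d)
    have hden2 : S - M * (Real.sinh (S * d) / Real.cosh (S * d)) ≠ 0 := by
      rw [sub_ne_zero]
      intro h
      apply hden.ne'
      field_simp at h
      linarith [h]
    rw [Real.tanh_eq_sinh_div_cosh, mul_comm d S]
    rw [div_eq_div_iff hden2 hden.ne']
    field_simp
  rw [hgoal]
  exact hq0F
end

section
/- Let d > 0 and let U ∈ C¹([−d,0];ℝ) be nonvanishing. For each κ > 0 let q_κ ∈ C¹([−d,0];ℝ) be the solution of q_κ′ = 2(U′/U)q_κ + κ² − q_κ² on [−d,0] with q_κ(−d) = 0. Then lim_{κ→∞} q_κ(0)/κ = 1. -/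
open Set Filter

set_option maxHeartbeats 1000000 in
/-- For the family `q_κ` of solutions of the Riccati problems
`q_κ′ = 2(U′/U)q_κ + κ² − q_κ²`, `q_κ(−d) = 0`, one has `lim_{κ→∞} q_κ(0)/κ = 1`. -/
theorem stmt_12 (d : ℝ) (hd : 0 < d) (U : ℝ → ℝ)
    (hU : ContDiffOn ℝ 1 U (Set.Icc (-d) 0))
    (hU0 : ∀ t ∈ Set.Icc (-d) 0, U t ≠ 0)
    (q : ℝ → ℝ → ℝ)
    (hq : ∀ κ : ℝ, 0 < κ →
      ContDiffOn ℝ 1 (q κ) (Set.Icc (-d) 0) ∧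
      (∀ x ∈ Set.Icc (-d) 0,
        derivWithin (q κ) (Set.Icc (-d) 0) x
          = 2 * (derivWithin U (Set.Icc (-d) 0) x / U x) * q κ x + κ ^ 2 - (q κ x) ^ 2) ∧
      q κ (-d) = 0) :
    Filter.Tendsto (fun κ : ℝ => q κ 0 / κ) Filter.atTop (nhds 1) := by
  have hd0 : (-d : ℝ) < 0 := by linarith
  set s : Set ℝ := Set.Icc (-d) 0 with hs
  set h : ℝ → ℝ := fun x => 2 * (derivWithin U s x / U x) with hh
  -- h is continuous on s, hence bounded
  have hhcont : ContinuousOn h s := by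
    apply ContinuousOn.mul continuousOn_const
    exact (hU.continuousOn_derivWithin (uniqueDiffOn_Icc hd0) le_rfl).div hU.continuousOn hU0
  obtain ⟨K, hK⟩ := (isCompact_Icc : IsCompact s).exists_bound_of_continuousOn hhcont
  set C : ℝ := |K| + 1 with hC
  have hC1 : (1 : ℝ) ≤ C := by rw [hC]; linarith [abs_nonneg K]
  have hCK : ∀ x ∈ s, |h x| ≤ C - 1 := by
    intro x hx
    have := hK x hx
    rw [Real.norm_eq_abs] at this
    have : |h x| ≤ |K| := this.trans (le_abs_self K)
    linarith
  -- right-derivative facts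
  have hmem : ∀ x ∈ Set.Ico (-d) (0 : ℝ), s ∈ nhdsWithin x (Set.Ici x) := by
    intro x hx
    apply Filter.mem_of_superset
      (inter_mem self_mem_nhdsWithin (mem_nhdsWithin_of_mem_nhds (Iic_mem_nhds hx.2)))
    rintro y ⟨h1, h2⟩
    exact ⟨le_trans hx.1 h1, h2⟩
  have hder : ∀ κ : ℝ, 0 < κ → ∀ x ∈ Set.Ico (-d) (0 : ℝ),
      HasDerivWithinAt (q κ) (derivWithin (q κ) s x) (Set.Ici x) x := by
    intro κ hκ x hx
    have hdiff := ((hq κ hκ).1.differentiableOn one_ne_zero) x (Set.Ico_subset_Icc_self hx)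
    exact hdiff.hasDerivWithinAt.mono_of_mem_nhdsWithin (hmem x hx)
  -- Upper bound: q κ x ≤ κ + C on s
  have hup : ∀ κ : ℝ, 0 < κ → ∀ x ∈ s, q κ x ≤ κ + C := by
    intro κ hκ
    obtain ⟨hreg, hode, hinit⟩ := hq κ hκ
    have := image_le_of_deriv_right_lt_deriv_boundary (f := q κ)
      (f' := fun x => derivWithin (q κ) s x) (B := fun _ => κ + C) (B' := fun _ => 0)
      hreg.continuousOn (hder κ hκ)
      (by rw [hinit]; positivity) (fun _ => hasDerivAt_const _ _) ?_
    · exact this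
    · intro x hx heq
      have heq : q κ x = κ + C := heq
      have hxs : x ∈ s := Set.Ico_subset_Icc_self hx
      show derivWithin (q κ) s x < 0
      rw [hode x hxs]
      have hb := hCK x hxs
      have h1 : h x * q κ x ≤ (C - 1) * (κ + C) := by
        rw [heq]
        calc h x * (κ + C) ≤ |h x| * (κ + C) := by
              apply mul_le_mul_of_nonneg_right (le_abs_self _); linarith
          _ ≤ (C - 1) * (κ + C) := by
              apply mul_le_mul_of_nonneg_right hb; linarith
      rw [heq] at h1
      have : 2 * (derivWithin U s x / U x) * q κ x = h x * q κ x := rfl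
      rw [this, heq]
      nlinarith [h1, hκ, hC1]
  -- Lower bound
  have hlow : ∀ ε : ℝ, 0 < ε → ε < 1 → ∀ κ : ℝ, (C + 1 / d) / ε + 1 ≤ κ →
      (1 - ε) * κ ≤ q κ 0 := by
    intro ε hε hε1 κ hκN
    have hκ : 0 < κ := by
      have : 0 < (C + 1 / d) / ε := by positivity
      linarith
    obtain ⟨hreg, hode, hinit⟩ := hq κ hκ
    set lam : ℝ := (1 - ε) * κ / d with hlam
    have hlam0 : 0 ≤ lam := by
      apply div_nonneg _ hd.le
      nlinarith
    have key := image_le_of_deriv_right_lt_deriv_boundary' (f := fun x => lam * (x + d))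
      (f' := fun _ => lam) (B := q κ) (B' := fun x => derivWithin (q κ) s x) (a := -d) (b := 0)
      (by fun_prop)
      (fun x _ => by simpa using (((hasDerivAt_id x).add_const d).const_mul lam).hasDerivWithinAt)
      (by rw [hinit]; simp) hreg.continuousOn (hder κ hκ) ?_
    · have h0 : (0 : ℝ) ∈ s := ⟨hd0.le, le_rfl⟩
      have := key h0
      simpa [hlam, div_mul_cancel₀, hd.ne'] using this
    · intro x hx heq
      have heq : lam * (x + d) = q κ x := heq
      have hxs : x ∈ s := Set.Ico_subset_Icc_self hx
      show lam < derivWithin (q κ) s x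
      rw [hode x hxs]
      have hb := hCK x hxs
      -- q κ x = lam * (x + d) ∈ [0, (1-ε)κ]
      have hx1 : 0 ≤ x + d := by linarith [hx.1]
      have hx2 : x + d ≤ d := by linarith [hx.2]
      have hq0 : 0 ≤ q κ x := by rw [← heq]; positivity
      have hq1 : q κ x ≤ (1 - ε) * κ := by
        rw [← heq, hlam]
        rw [div_mul_eq_mul_div, div_le_iff₀ hd]
        have h0 : 0 ≤ (1 - ε) * κ := by nlinarith
        nlinarith
      have hhx : -(C - 1) ≤ h x := by
        have := abs_le.1 hb
        linarith [this.1]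
      have h1 : -(C * q κ x) ≤ h x * q κ x := by nlinarith
      have h2 : q κ x ≤ κ := by nlinarith
      have h3 : (q κ x) ^ 2 ≤ ((1 - ε) * κ) ^ 2 := by nlinarith
      have hκbig : (C + 1 / d) / ε + 1 ≤ κ := hκN
      have hεκ : C + 1 / d ≤ ε * (κ - 1) := by
        rw [div_add' _ _ _ hε.ne', div_le_iff₀ hε] at hκbig
        nlinarith
      have : 2 * (derivWithin U s x / U x) * q κ x = h x * q κ x := rfl
      rw [this]
      have hgoal : lam < -(C * q κ x) + κ ^ 2 - (q κ x) ^ 2 := by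
        have e1 : κ ^ 2 - ((1 - ε) * κ) ^ 2 = ε * (2 - ε) * κ ^ 2 := by ring
        have e2 : ε * κ ^ 2 ≤ ε * (2 - ε) * κ ^ 2 := by nlinarith
        have e3 : lam < ε * κ ^ 2 - C * κ := by
          rw [hlam, div_lt_iff₀ hd]
          have h4 : 1 / d ≤ ε * (κ - 1) - C := by linarith
          have h5 : 1 ≤ (ε * (κ - 1) - C) * d := by
            rw [div_le_iff₀ hd] at h4; linarith
          nlinarith
        nlinarith
      nlinarith
  -- Conclude the limit
  rw [Metric.tendsto_atTop]
  intro ε hε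
  set ε' : ℝ := min ε 1 / 2 with hε'
  have hε'0 : 0 < ε' := by positivity
  have hε'1 : ε' < 1 := by
    have : min ε 1 ≤ 1 := min_le_right _ _
    rw [hε']; linarith
  have hε'ε : ε' < ε := by
    have h1 : min ε 1 ≤ ε := min_le_left _ _
    rw [hε']; linarith
  refine ⟨max ((C + 1 / d) / ε' + 1) (max 1 (C / ε + 1)), fun κ hκN => ?_⟩
  have hκ1 : (1 : ℝ) ≤ κ := le_trans (le_trans (le_max_left _ _) (le_max_right _ _)) hκN
  have hκ : 0 < κ := by linarith
  have hlo := hlow ε' hε'0 hε'1 κ (le_trans (le_max_left _ _) hκN)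
  have hhi := hup κ hκ 0 ⟨hd0.le, le_rfl⟩
  have hκC : C / ε + 1 ≤ κ := le_trans (le_trans (le_max_right _ _) (le_max_right _ _)) hκN
  rw [Real.dist_eq, abs_sub_lt_iff]
  constructor
  · -- q κ 0 / κ - 1 < ε
    rw [sub_lt_iff_lt_add, div_lt_iff₀ hκ]
    have : C < ε * κ := by
      rw [div_add' _ _ _ hε.ne', div_le_iff₀ hε] at hκC
      nlinarith
    nlinarith
  · -- 1 - q κ 0 / κ < ε
    rw [sub_lt_iff_lt_add, ← sub_lt_iff_lt_add']
    have : 1 - ε < (1 - ε') := by linarith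
    have h2 : (1 - ε') ≤ q κ 0 / κ := by
      rw [le_div_iff₀ hκ]
      linarith [hlo]
    linarith
end

section
/- Let d > 0, let U ∈ C¹([−d,0];ℝ) be nonvanishing, and let 0 < κ_a < κ_b. Let q_a, q_b ∈ C¹([−d,0];ℝ) satisfy q_a′ = 2(U′/U)q_a + κ_a² − q_a² and q_b′ = 2(U′/U)q_b + κ_b² − q_b² on [−d,0], both with initial condition q(−d) = 0. Then q_a(x₃) < q_b(x₃) for every x₃ ∈ (−d,0]; in particular q_a(0) < q_b(0), i.e. the value q_κ(0) is strictly increasing in κ². -/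
open Set Filter Topology

/-- If `f a = 0` and whenever `f` vanishes its (within) derivative is positive, then
`f` never takes a negative value on `[a,b]`. -/
lemma aux_no_neg (a b : ℝ) (f f' : ℝ → ℝ)
    (hf : ∀ x ∈ Icc a b, HasDerivWithinAt f (f' x) (Icc a b) x)
    (hfa : f a = 0)
    (hpos : ∀ x ∈ Icc a b, f x = 0 → 0 < f' x) :
    ∀ y ∈ Ioc a b, ¬ f y < 0 := by
  intro y hy hfy
  have hay : a ≤ y := le_of_lt hy.1
  have hyb : y ≤ b := hy.2
  have hab : a ≤ b := le_trans hay hyb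
  have hcont : ContinuousOn f (Icc a b) := fun x hx => (hf x hx).continuousWithinAt
  set S : Set ℝ := Icc a y ∩ f ⁻¹' {0} with hS
  have hScl : IsClosed S :=
    (hcont.mono (Icc_subset_Icc le_rfl hyb)).preimage_isClosed_of_isClosed
      isClosed_Icc isClosed_singleton
  have hSne : S.Nonempty := ⟨a, ⟨left_mem_Icc.2 hay, by simpa using hfa⟩⟩
  have hSbdd : BddAbove S := ⟨y, fun x hx => hx.1.2⟩
  have hmem : sSup S ∈ S := hScl.csSup_mem hSne hSbdd
  set c := sSup S with hc
  have hfx2 : f c = 0 := by simpa using hmem.2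
  have hca : a ≤ c := hmem.1.1
  have hcy : c ≤ y := hmem.1.2
  have hcy' : c < y := lt_of_le_of_ne hcy (fun h => (ne_of_lt hfy) (h ▸ hfx2))
  have hcmem : c ∈ Icc a b := ⟨hca, le_trans hcy hyb⟩
  -- derivative at c is positive, so f is positive slightly to the right of c
  have hd := hpos c hcmem hfx2
  have hslope := (hasDerivWithinAt_iff_tendsto_slope.1 (hf c hcmem))
  have hsub : Ioc c y ⊆ Icc a b \ {c} := by
    intro z hz
    exact ⟨⟨le_trans hca (le_of_lt hz.1), le_trans hz.2 hyb⟩, ne_of_gt hz.1⟩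
  have hslope' : Tendsto (slope f c) (𝓝[Ioc c y] c) (𝓝 (f' c)) :=
    hslope.mono_left (nhdsWithin_mono _ hsub)
  have hNeBot : (𝓝[Ioc c y] c).NeBot := by
    rw [← mem_closure_iff_nhdsWithin_neBot, closure_Ioc (ne_of_lt hcy')]
    exact left_mem_Icc.2 hcy
  have hev : ∀ᶠ z in 𝓝[Ioc c y] c, 0 < slope f c z :=
    hslope'.eventually (eventually_gt_nhds hd)
  obtain ⟨z, hzslope, hzmem⟩ := (hev.and (eventually_mem_nhdsWithin)).exists
  have hfz : 0 < f z := by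
    have : slope f c z = (f z - f c) / (z - c) := by simp [slope_def_field, div_eq_div_iff]
    rw [this, hfx2, sub_zero] at hzslope
    have hzc : 0 < z - c := sub_pos.2 hzmem.1
    rcases div_pos_iff.1 hzslope with ⟨h1, _⟩ | ⟨_, h2⟩
    · exact h1
    · linarith
  -- IVT on [z, y] gives a zero of f above c, contradiction with sSup
  have hzy : z ≤ y := hzmem.2
  have hivt := intermediate_value_Icc' hzy
    (hcont.mono (Icc_subset_Icc (le_trans hca (le_of_lt hzmem.1)) hyb))
  have h0 : (0 : ℝ) ∈ Icc (f y) (f z) := ⟨le_of_lt hfy, le_of_lt hfz⟩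
  obtain ⟨w, hw, hfw⟩ := hivt h0
  have hwS : w ∈ S := ⟨⟨le_trans hca (le_trans (le_of_lt hzmem.1) hw.1), hw.2⟩, by simpa using hfw⟩
  have : w ≤ c := le_csSup hSbdd hwS
  exact absurd (lt_of_lt_of_le hzmem.1 hw.1) (not_lt.2 this)

lemma aux_pos (a b : ℝ) (hab : a < b) (f f' : ℝ → ℝ)
    (hf : ∀ x ∈ Icc a b, HasDerivWithinAt f (f' x) (Icc a b) x)
    (hfa : f a = 0)
    (hpos : ∀ x ∈ Icc a b, f x = 0 → 0 < f' x) :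
    ∀ x ∈ Ioc a b, 0 < f x := by
  intro x hx
  have hxmem : x ∈ Icc a b := ⟨le_of_lt hx.1, hx.2⟩
  rcases lt_trichotomy (f x) 0 with h | h | h
  · exact absurd h (aux_no_neg a b f f' hf hfa hpos x hx)
  · -- f x = 0 : derivative positive at x, f negative just to the left, contradiction
    exfalso
    have hd := hpos x hxmem h
    have hslope := (hasDerivWithinAt_iff_tendsto_slope.1 (hf x hxmem))
    have hsub : Ioo a x ⊆ Icc a b \ {x} := by
      intro z hz
      exact ⟨⟨le_of_lt hz.1, le_trans (le_of_lt hz.2) hx.2⟩, ne_of_lt hz.2⟩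
    have hslope' : Tendsto (slope f x) (𝓝[Ioo a x] x) (𝓝 (f' x)) :=
      hslope.mono_left (nhdsWithin_mono _ hsub)
    have hNeBot : (𝓝[Ioo a x] x).NeBot := by
      rw [← mem_closure_iff_nhdsWithin_neBot, closure_Ioo (ne_of_lt hx.1)]
      exact right_mem_Icc.2 (le_of_lt hx.1)
    have hev : ∀ᶠ z in 𝓝[Ioo a x] x, 0 < slope f x z :=
      hslope'.eventually (eventually_gt_nhds hd)
    obtain ⟨z, hzslope, hzmem⟩ := (hev.and (eventually_mem_nhdsWithin)).exists
    have hfz : f z < 0 := by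
      have : slope f x z = (f z - f x) / (z - x) := by simp [slope_def_field]
      rw [this, h, sub_zero] at hzslope
      have hzx : z - x < 0 := sub_neg.2 hzmem.2
      rcases div_pos_iff.1 hzslope with ⟨_, h2⟩ | ⟨h1, _⟩
      · linarith
      · exact h1
    exact aux_no_neg a b f f' hf hfa hpos z ⟨hzmem.1, le_trans (le_of_lt hzmem.2) hx.2⟩ hfz
  · exact h

/-- Strict monotonicity of the Riccati solution in `κ²`: if
`0 < κ_a < κ_b` then the corresponding solutions satisfy `q_a < q_b` on `(−d,0]`. -/
theorem stmt_13 (d : ℝ) (hd : 0 < d) (U qa qb : ℝ → ℝ) (κa κb : ℝ)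
    (hκa : 0 < κa) (hκab : κa < κb)
    (hU : ContDiffOn ℝ 1 U (Set.Icc (-d) 0))
    (hU0 : ∀ t ∈ Set.Icc (-d) 0, U t ≠ 0)
    (hqa : ContDiffOn ℝ 1 qa (Set.Icc (-d) 0))
    (hqb : ContDiffOn ℝ 1 qb (Set.Icc (-d) 0))
    (hodea : ∀ x ∈ Set.Icc (-d) 0,
      derivWithin qa (Set.Icc (-d) 0) x
        = 2 * (derivWithin U (Set.Icc (-d) 0) x / U x) * qa x + κa ^ 2 - (qa x) ^ 2)
    (hodeb : ∀ x ∈ Set.Icc (-d) 0,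
      derivWithin qb (Set.Icc (-d) 0) x
        = 2 * (derivWithin U (Set.Icc (-d) 0) x / U x) * qb x + κb ^ 2 - (qb x) ^ 2)
    (hqa0 : qa (-d) = 0) (hqb0 : qb (-d) = 0) :
    ∀ x ∈ Set.Ioc (-d) 0, qa x < qb x := by
  have hdiffa : DifferentiableOn ℝ qa (Set.Icc (-d) 0) := hqa.differentiableOn one_ne_zero
  have hdiffb : DifferentiableOn ℝ qb (Set.Icc (-d) 0) := hqb.differentiableOn one_ne_zero
  set s := Set.Icc (-d : ℝ) 0 with hs
  set f : ℝ → ℝ := fun x => qb x - qa x with hfdef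
  set f' : ℝ → ℝ := fun x => derivWithin qb s x - derivWithin qa s x with hf'def
  have hf : ∀ x ∈ s, HasDerivWithinAt f (f' x) s x := fun x hx =>
    ((hdiffb x hx).hasDerivWithinAt).sub ((hdiffa x hx).hasDerivWithinAt)
  have hfa : f (-d) = 0 := by simp [hfdef, hqa0, hqb0]
  have hpos : ∀ x ∈ s, f x = 0 → 0 < f' x := by
    intro x hx hfx
    have hq : qb x = qa x := by
      have := sub_eq_zero.1 hfx
      simpa using this
    have : f' x = κb ^ 2 - κa ^ 2 := by
      simp only [hf'def, hodea x hx, hodeb x hx, hq]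
      ring
    rw [this]
    nlinarith
  have key := aux_pos (-d) 0 (by linarith) f f' hf hfa hpos
  intro x hx
  have := key x hx
  simpa [hfdef, sub_pos] using this
end

section
/- Let d, g, σ > 0, let U ∈ C¹([−d,0];ℝ) be nonvanishing, and let λ₁, λ₂ > 0 with dual lattice Λ* = (2π/λ₁)ℤ × (2π/λ₂)ℤ. For each k = (k₁,k₂) ∈ Λ*∖{0} let q_k ∈ C¹([−d,0];ℝ) be the solution of q_k′ = 2(U′/U)q_k + |k|² − q_k² on [−d,0] with q_k(−d) = 0, where |k|² = k₁² + k₂². Then the set N(U) = { k ∈ Λ*∖{0} : q_k(0)·(g + σ|k|²) = k₁² U(0)² } is finite, and every k ∈ N(U) satisfies k₁ ≠ 0. -/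
open Set MeasureTheory intervalIntegral

lemma key_riccati (d M κ2 : ℝ) (hd : 0 < d) (hκ2 : 0 < κ2) (U q : ℝ → ℝ)
    (hU : ContDiffOn ℝ 1 U (Icc (-d) 0)) (hU0 : ∀ t ∈ Icc (-d) 0, U t ≠ 0)
    (hM : ∀ t ∈ Icc (-d) 0, U t ^ 2 ≤ M)
    (hq : ContDiffOn ℝ 1 q (Icc (-d) 0))
    (hode : ∀ x ∈ Icc (-d) 0, derivWithin q (Icc (-d) 0) x
      = 2 * (derivWithin U (Icc (-d) 0) x / U x) * q x + κ2 - q x ^ 2)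
    (hqd : q (-d) = 0) :
    2 / 3 * (U 0 ^ 2 / M) * (min d (1 / Real.sqrt κ2)) * κ2 ≤ q 0 := by
  have hd0 : (-d : ℝ) ≤ 0 := by linarith
  have mem0 : (0 : ℝ) ∈ Icc (-d) 0 := ⟨hd0, le_refl 0⟩
  have memd : (-d : ℝ) ∈ Icc (-d) 0 := ⟨le_refl _, hd0⟩
  have hU02 : 0 < U 0 ^ 2 := pow_two_pos_of_ne_zero (hU0 0 mem0)
  have hMpos : 0 < M := lt_of_lt_of_le hU02 (hM 0 mem0)
  have hqc : ContinuousOn q (Icc (-d) 0) := hq.continuousOn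
  set qe : ℝ → ℝ := IccExtend hd0 ((Icc (-d) 0).restrict q) with hqe_def
  have hqe_cont : Continuous qe := (ContinuousOn.restrict hqc).Icc_extend'
  have hqe_eq : ∀ x ∈ Icc (-d) 0, qe x = q x := by
    intro x hx
    simp [hqe_def, IccExtend_of_mem hd0 _ hx]
    rfl
  set Q : ℝ → ℝ := fun x => ∫ t in (-d)..x, qe t with hQdef
  have hQ : ∀ x, HasDerivAt Q (qe x) x := fun x =>
    intervalIntegral.integral_hasDerivAt_right (hqe_cont.intervalIntegrable _ _)
      (hqe_cont.stronglyMeasurableAtFilter _ _) hqe_cont.continuousAt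
  set φ : ℝ → ℝ := fun x => Real.exp (Q x) with hφdef
  have hφpos : ∀ x, 0 < φ x := fun x => Real.exp_pos _
  have hφd : ∀ x, HasDerivAt φ (qe x * φ x) x := by
    intro x
    have := (hQ x).exp
    simpa [hφdef, mul_comm] using this
  have hQcont : Continuous Q := continuous_iff_continuousAt.2 fun x => (hQ x).continuousAt
  have hφcont : Continuous φ := Real.continuous_exp.comp hQcont
  set G : ℝ → ℝ := fun x => q x * φ x / U x ^ 2 with hGdef
  have hGd : ∀ x ∈ Icc (-d) 0, HasDerivWithinAt G (κ2 * φ x / U x ^ 2) (Icc (-d) 0) x := by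
    intro x hx
    have hUx := hU0 x hx
    have hq' : HasDerivWithinAt q (derivWithin q (Icc (-d) 0) x) (Icc (-d) 0) x :=
      (hq.differentiableOn one_ne_zero x hx).hasDerivWithinAt
    have hU' : HasDerivWithinAt U (derivWithin U (Icc (-d) 0) x) (Icc (-d) 0) x :=
      (hU.differentiableOn one_ne_zero x hx).hasDerivWithinAt
    have hnum : HasDerivWithinAt (fun y => q y * φ y)
        (derivWithin q (Icc (-d) 0) x * φ x + q x * (qe x * φ x)) (Icc (-d) 0) x :=
      hq'.mul (hφd x).hasDerivWithinAt
    have hden : HasDerivWithinAt (fun y => U y ^ 2)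
        (2 * U x ^ 1 * derivWithin U (Icc (-d) 0) x) (Icc (-d) 0) x := by
      simpa using hU'.fun_pow 2
    have hdiv := hnum.div hden (pow_ne_zero 2 hUx)
    refine hdiv.congr_deriv ?_
    rw [hode x hx, hqe_eq x hx]
    field_simp
    ring
  have hGcont : ContinuousOn G (Icc (-d) 0) :=
    (hqc.mul hφcont.continuousOn).div (hU.continuousOn.pow 2)
      fun x hx => pow_ne_zero 2 (hU0 x hx)
  have hGmono : StrictMonoOn G (Icc (-d) 0) := by
    apply strictMonoOn_of_deriv_pos (convex_Icc _ _) hGcont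
    intro x hx
    rw [interior_Icc] at hx
    have hx' : x ∈ Icc (-d) 0 := Ioo_subset_Icc_self hx
    have hda : HasDerivAt G (κ2 * φ x / U x ^ 2) x :=
      (hGd x hx').hasDerivAt (Icc_mem_nhds hx.1 hx.2)
    rw [hda.deriv]
    have h1 : 0 < φ x := hφpos x
    have h2 : 0 < U x ^ 2 := pow_two_pos_of_ne_zero (hU0 x hx')
    exact div_pos (by positivity) h2
  have hGd0 : G (-d) = 0 := by simp [hGdef, hqd]
  have hGmon0 : ∀ s ∈ Icc (-d) 0, G s ≤ G 0 := fun s hs => hGmono.monotoneOn hs mem0 hs.2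
  have hG0pos : 0 < G 0 := by
    have := hGmono memd mem0 (by linarith)
    rwa [hGd0] at this
  have hP : 0 < q 0 * φ 0 := by
    have h := mul_pos hG0pos hU02
    rw [hGdef] at h
    rwa [div_mul_cancel₀ _ (ne_of_gt hU02)] at h
  have hq0pos : 0 < q 0 := by
    have := hφpos 0
    nlinarith
  set B : ℝ := M / U 0 ^ 2 with hBdef
  have hkey1 : ∀ s ∈ Icc (-d) 0, q s * φ s ≤ B * (q 0 * φ 0) := by
    intro s hs
    have h1 : G s ≤ G 0 := hGmon0 s hs
    have h2 : 0 ≤ G 0 := le_of_lt hG0pos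
    have hUs : 0 < U s ^ 2 := pow_two_pos_of_ne_zero (hU0 s hs)
    have e1 : q s * φ s = G s * U s ^ 2 := by
      rw [hGdef]
      rw [div_mul_cancel₀ _ (ne_of_gt hUs)]
    calc q s * φ s = G s * U s ^ 2 := e1
      _ ≤ G 0 * U s ^ 2 := mul_le_mul_of_nonneg_right h1 (le_of_lt hUs)
      _ ≤ G 0 * M := mul_le_mul_of_nonneg_left (hM s hs) h2
      _ = B * (q 0 * φ 0) := by
          rw [hGdef, hBdef]
          field_simp
  have hφlow : ∀ t ∈ Icc (-d) 0, φ 0 + B * (q 0 * φ 0) * t ≤ φ t := by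
    intro t ht
    have hftc : ∫ s in t..0, qe s * φ s = φ 0 - φ t :=
      intervalIntegral.integral_eq_sub_of_hasDerivAt
        (fun x _ => hφd x) ((hqe_cont.mul hφcont).intervalIntegrable _ _)
    have hbound : ∫ s in t..0, qe s * φ s ≤ ∫ s in t..0, B * (q 0 * φ 0) := by
      apply intervalIntegral.integral_mono_on ht.2
        ((hqe_cont.mul hφcont).intervalIntegrable _ _) intervalIntegrable_const
      intro s hs
      have hsI : s ∈ Icc (-d) 0 := ⟨le_trans ht.1 hs.1, hs.2⟩
      rw [Pi.mul_apply, hqe_eq s hsI]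
      exact hkey1 s hsI
    rw [hftc, intervalIntegral.integral_const, smul_eq_mul] at hbound
    nlinarith [hbound]
  have hintc : ContinuousOn (fun s => κ2 * φ s / U s ^ 2) (Icc (-d) 0) :=
    ((continuous_const.mul hφcont).continuousOn).div (hU.continuousOn.pow 2)
      fun x hx => pow_ne_zero 2 (hU0 x hx)
  have hGftc : ∫ s in (-d)..0, κ2 * φ s / U s ^ 2 = G 0 - G (-d) := by
    apply intervalIntegral.integral_eq_sub_of_hasDeriv_right_of_le hd0 hGcont
    · intro x hx
      have hx' : x ∈ Icc (-d) 0 := Ioo_subset_Icc_self hx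
      exact ((hGd x hx').hasDerivAt (Icc_mem_nhds hx.1 hx.2)).hasDerivWithinAt
    · exact hintc.intervalIntegrable_of_Icc hd0
  set ε : ℝ := min d (1 / Real.sqrt κ2) with hεdef
  have hsqrtpos : 0 < Real.sqrt κ2 := Real.sqrt_pos.2 hκ2
  have hεpos : 0 < ε := lt_min hd (by positivity)
  have hεd : ε ≤ d := min_le_left _ _
  have hεκ : κ2 * ε ^ 2 ≤ 1 := by
    have h1 : ε ≤ 1 / Real.sqrt κ2 := min_le_right _ _
    have h2 : ε ^ 2 ≤ (1 / Real.sqrt κ2) ^ 2 := by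
      apply pow_le_pow_left₀ (le_of_lt hεpos) h1
    have h3 : (1 / Real.sqrt κ2) ^ 2 = 1 / κ2 := by
      rw [div_pow, one_pow, Real.sq_sqrt (le_of_lt hκ2)]
    rw [h3] at h2
    calc κ2 * ε ^ 2 ≤ κ2 * (1 / κ2) := mul_le_mul_of_nonneg_left h2 (le_of_lt hκ2)
      _ = 1 := mul_one_div_cancel (ne_of_gt hκ2)
  have hint1 : IntervalIntegrable (fun s => κ2 * φ s / U s ^ 2) volume (-d) (-ε) :=
    (hintc.mono (Icc_subset_Icc le_rfl (by linarith))).intervalIntegrable_of_Icc (by linarith)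
  have hint2 : IntervalIntegrable (fun s => κ2 * φ s / U s ^ 2) volume (-ε) 0 :=
    (hintc.mono (Icc_subset_Icc (by linarith) le_rfl)).intervalIntegrable_of_Icc (by linarith)
  have hsplit : ∫ s in (-ε)..0, κ2 * φ s / U s ^ 2 ≤ ∫ s in (-d)..0, κ2 * φ s / U s ^ 2 := by
    rw [← intervalIntegral.integral_add_adjacent_intervals hint1 hint2]
    have hnn : 0 ≤ ∫ s in (-d)..(-ε), κ2 * φ s / U s ^ 2 := by
      apply intervalIntegral.integral_nonneg (by linarith)
      intro s hs
      have hsI : s ∈ Icc (-d) 0 := ⟨hs.1, by linarith [hs.2]⟩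
      have h2 : 0 < U s ^ 2 := pow_two_pos_of_ne_zero (hU0 s hsI)
      have h1 : 0 < φ s := hφpos s
      positivity
    linarith
  have hintlin : IntervalIntegrable (fun s => κ2 / M * (φ 0 + B * (q 0 * φ 0) * s))
      volume (-ε) 0 := by
    exact (continuous_const.mul (continuous_const.add
      (continuous_const.mul continuous_id))).intervalIntegrable _ _
  have hlow : ∫ s in (-ε)..0, κ2 / M * (φ 0 + B * (q 0 * φ 0) * s)
      ≤ ∫ s in (-ε)..0, κ2 * φ s / U s ^ 2 := by
    apply intervalIntegral.integral_mono_on (by linarith) hintlin hint2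
    intro s hs
    have hsI : s ∈ Icc (-d) 0 := ⟨le_trans (by linarith) hs.1, hs.2⟩
    have h1 : φ 0 + B * (q 0 * φ 0) * s ≤ φ s := hφlow s hsI
    have hUs : 0 < U s ^ 2 := pow_two_pos_of_ne_zero (hU0 s hsI)
    have h2 : φ s / M ≤ φ s / U s ^ 2 :=
      div_le_div_of_nonneg_left (le_of_lt (hφpos s)) hUs (hM s hsI)
    calc κ2 / M * (φ 0 + B * (q 0 * φ 0) * s) ≤ κ2 / M * φ s :=
          mul_le_mul_of_nonneg_left h1 (by positivity)
      _ = κ2 * (φ s / M) := by ring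
      _ ≤ κ2 * (φ s / U s ^ 2) := mul_le_mul_of_nonneg_left h2 (le_of_lt hκ2)
      _ = κ2 * φ s / U s ^ 2 := by ring
  have hcomp : ∫ s in (-ε)..0, κ2 / M * (φ 0 + B * (q 0 * φ 0) * s)
      = κ2 / M * (ε * φ 0 - B * (q 0 * φ 0) * ε ^ 2 / 2) := by
    rw [intervalIntegral.integral_const_mul]
    rw [intervalIntegral.integral_add intervalIntegrable_const
      (intervalIntegrable_id.const_mul _)]
    rw [intervalIntegral.integral_const, intervalIntegral.integral_const_mul, integral_id]
    simp only [smul_eq_mul]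
    ring
  have hmain : κ2 / M * (ε * φ 0 - B * (q 0 * φ 0) * ε ^ 2 / 2) ≤ q 0 * φ 0 / U 0 ^ 2 := by
    have hG0 : ∫ s in (-d)..0, κ2 * φ s / U s ^ 2 = q 0 * φ 0 / U 0 ^ 2 := by
      rw [hGftc, hGd0, sub_zero]
    calc κ2 / M * (ε * φ 0 - B * (q 0 * φ 0) * ε ^ 2 / 2)
        = ∫ s in (-ε)..0, κ2 / M * (φ 0 + B * (q 0 * φ 0) * s) := hcomp.symm
      _ ≤ ∫ s in (-ε)..0, κ2 * φ s / U s ^ 2 := hlow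
      _ ≤ ∫ s in (-d)..0, κ2 * φ s / U s ^ 2 := hsplit
      _ = q 0 * φ 0 / U 0 ^ 2 := hG0
  have hfin : κ2 * ε * φ 0 * U 0 ^ 2 ≤ 3 / 2 * (M * (q 0 * φ 0)) := by
    have h1 : κ2 / M * (ε * φ 0 - B * (q 0 * φ 0) * ε ^ 2 / 2) * (M * U 0 ^ 2)
        = κ2 * ε * φ 0 * U 0 ^ 2 - κ2 * ε ^ 2 * (q 0 * φ 0) * M / 2 := by
      rw [hBdef]
      field_simp [hU0 0 mem0]
    have h2 := mul_le_mul_of_nonneg_right hmain (le_of_lt (mul_pos hMpos hU02))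
    rw [h1] at h2
    have h3 : q 0 * φ 0 / U 0 ^ 2 * (M * U 0 ^ 2) = M * (q 0 * φ 0) := by
      field_simp [hU0 0 mem0]
    rw [h3] at h2
    have h4 : κ2 * ε ^ 2 * (q 0 * φ 0) * M / 2 ≤ q 0 * φ 0 * M / 2 := by
      nlinarith [mul_pos hP hMpos]
    linarith
  have hgoal : 2 / 3 * (U 0 ^ 2 / M) * ε * κ2 * φ 0 ≤ q 0 * φ 0 := by
    have h5 := mul_le_mul_of_nonneg_left hfin
      (le_of_lt (show (0 : ℝ) < 2 / (3 * M) by positivity))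
    calc 2 / 3 * (U 0 ^ 2 / M) * ε * κ2 * φ 0
        = 2 / (3 * M) * (κ2 * ε * φ 0 * U 0 ^ 2) := by field_simp
      _ ≤ 2 / (3 * M) * (3 / 2 * (M * (q 0 * φ 0))) := h5
      _ = q 0 * φ 0 := by field_simp
  exact le_of_mul_le_mul_right hgoal (hφpos 0)


set_option maxHeartbeats 1000000 in

/-- The set `N(U)` of nonzero lattice vectors satisfying the dispersion
relation `q_k(0)(g + σ|k|²) = k₁²U(0)²` is finite, and each of its members has `k₁ ≠ 0`. -/
theorem stmt_14 (d g σ lam1 lam2 : ℝ) (hd : 0 < d) (hg : 0 < g) (hσ : 0 < σ)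
    (hlam1 : 0 < lam1) (hlam2 : 0 < lam2) (U : ℝ → ℝ)
    (hU : ContDiffOn ℝ 1 U (Set.Icc (-d) 0))
    (hU0 : ∀ t ∈ Set.Icc (-d) 0, U t ≠ 0)
    (Λstar : Set (ℝ × ℝ))
    (hΛ : Λstar = {k : ℝ × ℝ | ∃ m n : ℤ,
      k = ((2 * Real.pi / lam1) * (m : ℝ), (2 * Real.pi / lam2) * (n : ℝ))})
    (q : ℝ × ℝ → ℝ → ℝ)
    (hq : ∀ k ∈ Λstar, k ≠ (0 : ℝ × ℝ) →
      ContDiffOn ℝ 1 (q k) (Set.Icc (-d) 0) ∧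
      (∀ x ∈ Set.Icc (-d) 0,
        derivWithin (q k) (Set.Icc (-d) 0) x
          = 2 * (derivWithin U (Set.Icc (-d) 0) x / U x) * q k x
            + (k.1 ^ 2 + k.2 ^ 2) - (q k x) ^ 2) ∧
      q k (-d) = 0)
    (N : Set (ℝ × ℝ))
    (hN : N = {k : ℝ × ℝ | k ∈ Λstar ∧ k ≠ 0 ∧
      q k 0 * (g + σ * (k.1 ^ 2 + k.2 ^ 2)) = k.1 ^ 2 * (U 0) ^ 2}) :
    N.Finite ∧ ∀ k ∈ N, k.1 ≠ 0 := by
  have hd0 : (-d : ℝ) ≤ 0 := by linarith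
  have mem0 : (0 : ℝ) ∈ Set.Icc (-d) 0 := ⟨hd0, le_refl 0⟩
  have hU02 : 0 < U 0 ^ 2 := pow_two_pos_of_ne_zero (hU0 0 mem0)
  obtain ⟨x₀, hx₀, hx₀max⟩ := (isCompact_Icc (a := -d) (b := 0)).exists_isMaxOn
    (Set.nonempty_Icc.2 hd0) (hU.continuousOn.pow 2)
  set M : ℝ := U x₀ ^ 2 with hMdef
  have hM : ∀ t ∈ Set.Icc (-d) 0, U t ^ 2 ≤ M := fun t ht => hx₀max ht
  have hMpos : 0 < M := lt_of_lt_of_le hU02 (hM 0 mem0)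
  have hκpos : ∀ k : ℝ × ℝ, k ≠ 0 → 0 < k.1 ^ 2 + k.2 ^ 2 := by
    intro k hk
    by_contra h
    push_neg at h
    have h1 : k.1 = 0 ∧ k.2 = 0 := by
      constructor <;> nlinarith [sq_nonneg k.1, sq_nonneg k.2]
    exact hk (Prod.ext_iff.2 ⟨by simpa using h1.1, by simpa using h1.2⟩)
  -- lower bound for q k 0 from the key Riccati lemma
  have hkey : ∀ k ∈ N,
      2 / 3 * (U 0 ^ 2 / M) * (min d (1 / Real.sqrt (k.1 ^ 2 + k.2 ^ 2)))
        * (k.1 ^ 2 + k.2 ^ 2) ≤ q k 0 := by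
    intro k hk
    rw [hN] at hk
    obtain ⟨hkΛ, hk0, _⟩ := hk
    obtain ⟨hreg, hode, hinit⟩ := hq k hkΛ hk0
    exact key_riccati d M (k.1 ^ 2 + k.2 ^ 2) hd (hκpos k hk0) U (q k) hU hU0 hM hreg hode hinit
  have hq0pos : ∀ k ∈ N, 0 < q k 0 := by
    intro k hk
    refine lt_of_lt_of_le ?_ (hkey k hk)
    have hk0 : k ≠ 0 := by rw [hN] at hk; exact hk.2.1
    have h1 := hκpos k hk0
    have h2 : 0 < min d (1 / Real.sqrt (k.1 ^ 2 + k.2 ^ 2)) := by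
      refine lt_min hd ?_
      have : 0 < Real.sqrt (k.1 ^ 2 + k.2 ^ 2) := Real.sqrt_pos.2 h1
      positivity
    positivity
  constructor
  · -- Finiteness
    set R : ℝ := 3 * M / (2 * σ) with hRdef
    have hRpos : 0 < R := by positivity
    set C : ℝ := max (R / d) (R ^ 2) with hCdef
    have hC : ∀ k ∈ N, k.1 ^ 2 + k.2 ^ 2 ≤ C := by
      intro k hk
      have hkN := hk
      rw [hN] at hkN
      obtain ⟨hkΛ, hk0, hdisp⟩ := hkN
      set κ2 : ℝ := k.1 ^ 2 + k.2 ^ 2 with hκ2def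
      have hκ2 : 0 < κ2 := hκpos k hk0
      have hqpos := hq0pos k hk
      -- q k 0 ≤ U 0 ^ 2 / σ
      have hub : q k 0 ≤ U 0 ^ 2 / σ := by
        have h1 : q k 0 * (σ * κ2) ≤ q k 0 * (g + σ * κ2) :=
          mul_le_mul_of_nonneg_left (by linarith) (le_of_lt hqpos)
        have h2 : k.1 ^ 2 * U 0 ^ 2 ≤ κ2 * U 0 ^ 2 := by
          have : k.1 ^ 2 ≤ κ2 := by nlinarith [sq_nonneg k.2]
          exact mul_le_mul_of_nonneg_right this (le_of_lt hU02)
        have h3 : q k 0 * (σ * κ2) ≤ κ2 * U 0 ^ 2 := by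
          rw [hdisp] at h1; linarith
        rw [div_eq_mul_inv, ← mul_le_mul_iff_of_pos_right (mul_pos hσ hκ2)]
        calc q k 0 * (σ * κ2) ≤ κ2 * U 0 ^ 2 := h3
          _ = U 0 ^ 2 * σ⁻¹ * (σ * κ2) := by field_simp
      have hcomb : min d (1 / Real.sqrt κ2) * κ2 ≤ R := by
        have h4 := le_trans (hkey k hk) hub
        rw [← hκ2def] at h4
        have h6 := mul_le_mul_of_nonneg_left h4
          (le_of_lt (show (0 : ℝ) < 3 * M / (2 * U 0 ^ 2) by positivity))
        have e1 : 3 * M / (2 * U 0 ^ 2) * (2 / 3 * (U 0 ^ 2 / M)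
            * (min d (1 / Real.sqrt κ2)) * κ2) = min d (1 / Real.sqrt κ2) * κ2 := by
          field_simp [hU0 0 mem0]
        have e2 : 3 * M / (2 * U 0 ^ 2) * (U 0 ^ 2 / σ) = R := by
          rw [hRdef]
          field_simp [hU0 0 mem0]
        rw [e1, e2] at h6
        exact h6
      set s : ℝ := Real.sqrt κ2 with hsdef
      have hspos : 0 < s := Real.sqrt_pos.2 hκ2
      have hs2 : s ^ 2 = κ2 := Real.sq_sqrt (le_of_lt hκ2)
      rcases le_or_gt d (1 / s) with hcase | hcase
      · -- min = d
        rw [min_eq_left hcase] at hcomb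
        have : κ2 ≤ R / d := by
          rw [le_div_iff₀ hd]; linarith [hcomb]
        exact le_trans this (le_max_left _ _)
      · -- min = 1/s
        rw [min_eq_right (le_of_lt hcase)] at hcomb
        have hsR : s ≤ R := by
          have : 1 / s * κ2 = s := by
            rw [← hs2]; field_simp
          linarith [hcomb, this.symm.trans_le hcomb]
        have : κ2 ≤ R ^ 2 := by rw [← hs2]; nlinarith
        exact le_trans this (le_max_right _ _)
    -- lattice finiteness
    set a : ℝ := 2 * Real.pi / lam1 with hadef
    set b : ℝ := 2 * Real.pi / lam2 with hbdef
    have hapos : 0 < a := by rw [hadef]; positivity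
    have hbpos : 0 < b := by rw [hbdef]; positivity
    set L1 : ℤ := ⌊Real.sqrt (C / a ^ 2)⌋ with hL1def
    set L2 : ℤ := ⌊Real.sqrt (C / b ^ 2)⌋ with hL2def
    have hsub : N ⊆ (fun p : ℤ × ℤ => (a * (p.1 : ℝ), b * (p.2 : ℝ))) ''
        (Set.Icc (-L1) L1 ×ˢ Set.Icc (-L2) L2) := by
      intro k hk
      have hCk := hC k hk
      have hkΛ : k ∈ Λstar := by rw [hN] at hk; exact hk.1
      rw [hΛ] at hkΛ
      obtain ⟨m, n, hmn⟩ := hkΛ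
      refine ⟨(m, n), Set.mem_prod.2 ⟨?_, ?_⟩, hmn.symm⟩
      · have h1 : k.1 ^ 2 = a ^ 2 * (m : ℝ) ^ 2 := by rw [hmn]; ring
        have h3 : ((m : ℝ)) ^ 2 ≤ C / a ^ 2 := by
          rw [le_div_iff₀ (by positivity)]
          nlinarith [sq_nonneg k.2]
        have h4 : |(m : ℝ)| ≤ Real.sqrt (C / a ^ 2) := Real.abs_le_sqrt h3
        rw [← Int.cast_abs] at h4
        exact Set.mem_Icc.2 (abs_le.1 (Int.le_floor.2 h4))
      · have h1 : k.2 ^ 2 = b ^ 2 * (n : ℝ) ^ 2 := by rw [hmn]; ring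
        have h3 : ((n : ℝ)) ^ 2 ≤ C / b ^ 2 := by
          rw [le_div_iff₀ (by positivity)]
          nlinarith [sq_nonneg k.1]
        have h4 : |(n : ℝ)| ≤ Real.sqrt (C / b ^ 2) := Real.abs_le_sqrt h3
        rw [← Int.cast_abs] at h4
        exact Set.mem_Icc.2 (abs_le.1 (Int.le_floor.2 h4))
    exact Set.Finite.subset
      (Set.Finite.image _ ((Set.finite_Icc _ _).prod (Set.finite_Icc _ _))) hsub
  · -- every member has nonzero first component
    intro k hk
    have hqpos := hq0pos k hk
    rw [hN] at hk
    obtain ⟨hkΛ, hk0, hdisp⟩ := hk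
    intro hk1
    have hκ2 := hκpos k hk0
    have hpos : 0 < q k 0 * (g + σ * (k.1 ^ 2 + k.2 ^ 2)) := mul_pos hqpos (by nlinarith)
    rw [hdisp, hk1] at hpos
    norm_num at hpos
end

section
/- Let d, g, σ > 0, let U ∈ C¹([−d,0];ℝ) be nonvanishing, and let λ₁, λ₂ > 0 with dual lattice Λ* = (2π/λ₁)ℤ × (2π/λ₂)ℤ. For each k ∈ Λ*∖{0} let q_k be the solution of the Riccati initial value problem with parameter κ² = |k|² = k₁² + k₂². If k, l ∈ Λ*∖{0} both satisfy the dispersion relation q_k(0)·(g + σ|k|²) = k₁²U(0)² and q_l(0)·(g + σ|l|²) = l₁²U(0)², and if k₁² = l₁², then k₂² = l₂². -/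
open Set intervalIntegral

/-- Strict monotonicity of the Riccati solution at `0` in the parameter. -/
lemma riccati_strict_mono (d : ℝ) (hd : 0 < d) (U : ℝ → ℝ)
    (hU : ContDiffOn ℝ 1 U (Set.Icc (-d) 0))
    (hU0 : ∀ t ∈ Set.Icc (-d) 0, U t ≠ 0)
    (qk ql : ℝ → ℝ) (ck cl : ℝ)
    (hqk1 : ContDiffOn ℝ 1 qk (Set.Icc (-d) 0))
    (hqk2 : ∀ x ∈ Set.Icc (-d) 0, derivWithin qk (Set.Icc (-d) 0) x
      = 2 * (derivWithin U (Set.Icc (-d) 0) x / U x) * qk x + ck - qk x ^ 2)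
    (hqk3 : qk (-d) = 0)
    (hql1 : ContDiffOn ℝ 1 ql (Set.Icc (-d) 0))
    (hql2 : ∀ x ∈ Set.Icc (-d) 0, derivWithin ql (Set.Icc (-d) 0) x
      = 2 * (derivWithin U (Set.Icc (-d) 0) x / U x) * ql x + cl - ql x ^ 2)
    (hql3 : ql (-d) = 0)
    (hcc : cl < ck) : ql 0 < qk 0 := by
  have hd0 : (-d : ℝ) < 0 := by linarith
  set I : Set ℝ := Set.Icc (-d) 0 with hIdef
  have hUnique : UniqueDiffOn ℝ I := uniqueDiffOn_Icc hd0
  -- coefficient function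
  set a : ℝ → ℝ := fun x => 2 * (derivWithin U I x / U x) - (qk x + ql x) with ha
  have hacont : ContinuousOn a I := by
    apply ContinuousOn.sub
    · exact (continuousOn_const.mul ((hU.continuousOn_derivWithin hUnique le_rfl).div
        hU.continuousOn hU0))
    · exact (hqk1.continuousOn.add hql1.continuousOn)
  -- clamp
  set p : ℝ → ℝ := fun x => max (-d) (min x 0) with hp
  have hpmem : ∀ x, p x ∈ I := by
    intro x
    constructor
    · exact le_max_left _ _
    · exact max_le (le_of_lt hd0) (min_le_right _ _)
  have hpid : ∀ x ∈ I, p x = x := fun x hx => by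
    show max (-d) (min x 0) = x
    rw [min_eq_left hx.2, max_eq_right hx.1]
  have hpcont : Continuous p := continuous_const.max (continuous_id.min continuous_const)
  set ab : ℝ → ℝ := fun x => a (p x) with hab
  have habc : Continuous ab := hacont.comp_continuous hpcont hpmem
  set A : ℝ → ℝ := fun x => ∫ t in (-d)..x, ab t with hA
  have hAderiv : ∀ x : ℝ, HasDerivAt A (ab x) x := by
    intro x
    exact intervalIntegral.integral_hasDerivAt_right
      (habc.intervalIntegrable _ _)
      habc.stronglyMeasurable.stronglyMeasurableAtFilter habc.continuousAt
  set w : ℝ → ℝ := fun x => qk x - ql x with hw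
  set c : ℝ := ck - cl with hc
  have hcpos : 0 < c := by simp [hc]; linarith
  have hwderiv : ∀ x ∈ I, HasDerivWithinAt w (a x * w x + c) I x := by
    intro x hx
    have h1 : HasDerivWithinAt qk (derivWithin qk I x) I x :=
      ((hqk1.differentiableOn one_ne_zero) x hx).hasDerivWithinAt
    have h2 : HasDerivWithinAt ql (derivWithin ql I x) I x :=
      ((hql1.differentiableOn one_ne_zero) x hx).hasDerivWithinAt
    have := h1.sub h2
    convert this using 1
    any_goals rfl
    rw [hqk2 x hx, hql2 x hx]
    simp only [ha, hw, hc]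
    ring
  set f : ℝ → ℝ := fun x => w x * Real.exp (-(A x)) with hf
  have hfderiv : ∀ x ∈ I, HasDerivWithinAt f (c * Real.exp (-(A x))) I x := by
    intro x hx
    have he : HasDerivWithinAt (fun y => Real.exp (-(A y)))
        (Real.exp (-(A x)) * (-(ab x))) I x :=
      (((hAderiv x).hasDerivWithinAt).neg).exp
    have := (hwderiv x hx).mul he
    convert this using 1
    any_goals rfl
    have hax : ab x = a x := by show a (p x) = a x; rw [hpid x hx]
    rw [hax]
    ring
  have hfc : ContinuousOn f I := fun x hx =>
    ((hfderiv x hx).differentiableWithinAt).continuousWithinAt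
  have hint : interior I ⊆ I := interior_subset
  have hmono : StrictMonoOn f I := by
    apply strictMonoOn_of_hasDerivWithinAt_pos (convex_Icc _ _) hfc
    · intro x hx
      exact (hfderiv x (hint hx)).mono hint
    · intro x _
      positivity
  have hmem1 : (-d : ℝ) ∈ I := ⟨le_rfl, le_of_lt hd0⟩
  have hmem2 : (0 : ℝ) ∈ I := ⟨le_of_lt hd0, le_rfl⟩
  have := hmono hmem1 hmem2 hd0
  have hfd : f (-d) = 0 := by simp [hf, hw, hqk3, hql3]
  rw [hfd] at this
  have h2 : 0 < (qk 0 - ql 0) * Real.exp (-(A 0)) := this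
  have hexp : 0 < Real.exp (-(A 0)) := Real.exp_pos _
  nlinarith [h2, hexp]
/-- If two nonzero lattice vectors `k, l` both satisfy the dispersion
relation and `k₁² = l₁²`, then `k₂² = l₂²`. -/
theorem stmt_15 (d g σ lam1 lam2 : ℝ) (hd : 0 < d) (hg : 0 < g) (hσ : 0 < σ)
    (hlam1 : 0 < lam1) (hlam2 : 0 < lam2) (U : ℝ → ℝ)
    (hU : ContDiffOn ℝ 1 U (Set.Icc (-d) 0))
    (hU0 : ∀ t ∈ Set.Icc (-d) 0, U t ≠ 0)
    (Λstar : Set (ℝ × ℝ))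
    (hΛ : Λstar = {k : ℝ × ℝ | ∃ m n : ℤ,
      k = ((2 * Real.pi / lam1) * (m : ℝ), (2 * Real.pi / lam2) * (n : ℝ))})
    (q : ℝ × ℝ → ℝ → ℝ)
    (hq : ∀ k ∈ Λstar, k ≠ (0 : ℝ × ℝ) →
      ContDiffOn ℝ 1 (q k) (Set.Icc (-d) 0) ∧
      (∀ x ∈ Set.Icc (-d) 0,
        derivWithin (q k) (Set.Icc (-d) 0) x
          = 2 * (derivWithin U (Set.Icc (-d) 0) x / U x) * q k x
            + (k.1 ^ 2 + k.2 ^ 2) - (q k x) ^ 2) ∧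
      q k (-d) = 0)
    (k l : ℝ × ℝ) (hk : k ∈ Λstar) (hk0 : k ≠ 0) (hl : l ∈ Λstar) (hl0 : l ≠ 0)
    (hdispk : q k 0 * (g + σ * (k.1 ^ 2 + k.2 ^ 2)) = k.1 ^ 2 * (U 0) ^ 2)
    (hdispl : q l 0 * (g + σ * (l.1 ^ 2 + l.2 ^ 2)) = l.1 ^ 2 * (U 0) ^ 2)
    (h1 : k.1 ^ 2 = l.1 ^ 2) :
    k.2 ^ 2 = l.2 ^ 2 := by
  obtain ⟨hk1, hk2, hk3⟩ := hq k hk hk0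
  obtain ⟨hl1, hl2, hl3⟩ := hq l hl hl0
  have hd0 : (-d : ℝ) < 0 := by linarith
  have hmem0 : (0 : ℝ) ∈ Set.Icc (-d) 0 := ⟨le_of_lt hd0, le_rfl⟩
  have hU0sq : 0 < (U 0) ^ 2 := by
    have := hU0 0 hmem0; positivity
  have hgk : 0 < g + σ * (k.1 ^ 2 + k.2 ^ 2) := by positivity
  have hgl : 0 < g + σ * (l.1 ^ 2 + l.2 ^ 2) := by positivity
  have hqk0 : 0 ≤ q k 0 := by nlinarith [sq_nonneg k.1, sq_nonneg (U 0)]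
  have hql0 : 0 ≤ q l 0 := by nlinarith [sq_nonneg l.1, sq_nonneg (U 0)]
  rw [h1] at hdispk hgk
  rcases lt_trichotomy (k.2 ^ 2) (l.2 ^ 2) with hlt | heq | hlt
  · exfalso
    have hqlt : q k 0 < q l 0 :=
      riccati_strict_mono d hd U hU hU0 (q l) (q k)
        (l.1 ^ 2 + l.2 ^ 2) (l.1 ^ 2 + k.2 ^ 2) hl1 hl2 hl3 hk1
        (fun x hx => by rw [hk2 x hx, h1]) hk3 (by linarith)
    nlinarith [mul_lt_mul_of_pos_right hqlt hgl,
      mul_nonneg (mul_nonneg hqk0 hσ.le) (sub_nonneg.2 hlt.le)]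
  · exact heq
  · exfalso
    have hqlt : q l 0 < q k 0 :=
      riccati_strict_mono d hd U hU hU0 (q k) (q l)
        (l.1 ^ 2 + k.2 ^ 2) (l.1 ^ 2 + l.2 ^ 2) hk1
        (fun x hx => by rw [hk2 x hx, h1]) hk3 hl1 hl2 hl3 (by linarith)
    nlinarith [mul_lt_mul_of_pos_right hqlt hgk,
      mul_nonneg (mul_nonneg hql0 hσ.le) (sub_nonneg.2 hlt.le)]
end

section
/- Let d > 0 and let U ∈ C¹([−d,0];ℝ) be nonvanishing. Let N be a finite set of pairs k = (k₁,k₂) ∈ ℝ² with k₁ > 0 and k₂ > 0, and let a : N → ℝ be coefficients with a_k ≠ 0 for at least one k ∈ N. For each k ∈ N let q_k ∈ C¹([−d,0];ℝ) satisfy the Riccati equation q_k′ = 2(U′/U)q_k + (k₁²+k₂²) − q_k² on [−d,0] with q_k(−d) = 0, and let Q_k ∈ C¹([−d,0];ℝ) be strictly positive with Q_k′ = q_k Q_k. Define f = Σ_{k∈N} (a_k² k₂²/k₁²)·Q_k²·(k₁² − k₂² + q_k²). If U′(x₃)·f(x₃) = 0 for all x₃ ∈ [−d,0], then U′ vanishes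 identically on [−d,0], i.e. U is constant. -/
open Set Filter Topology

/-- If `U′f ≡ 0` on `[−d,0]`, where
`f = Σ_k (a_k²k₂²/k₁²)Q_k²(k₁² − k₂² + q_k²)` with at least one `a_k ≠ 0`, the `q_k`
solving the Riccati initial value problems and `Q_k > 0` with `Q_k′ = q_kQ_k`, then
`U′` vanishes identically on `[−d,0]`, i.e. `U` is constant. -/
theorem stmt_17 (d : ℝ) (hd : 0 < d) (U : ℝ → ℝ)
    (hU : ContDiffOn ℝ 1 U (Set.Icc (-d) 0))
    (hU0 : ∀ t ∈ Set.Icc (-d) 0, U t ≠ 0)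
    (N : Finset (ℝ × ℝ)) (hN : ∀ k ∈ N, 0 < k.1 ∧ 0 < k.2)
    (a : ℝ × ℝ → ℝ) (ha : ∃ k ∈ N, a k ≠ 0)
    (q Q : ℝ × ℝ → ℝ → ℝ)
    (hq : ∀ k ∈ N, ContDiffOn ℝ 1 (q k) (Set.Icc (-d) 0))
    (hode : ∀ k ∈ N, ∀ x ∈ Set.Icc (-d) 0,
      derivWithin (q k) (Set.Icc (-d) 0) x
        = 2 * (derivWithin U (Set.Icc (-d) 0) x / U x) * q k x
          + (k.1 ^ 2 + k.2 ^ 2) - (q k x) ^ 2)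
    (hq0 : ∀ k ∈ N, q k (-d) = 0)
    (hQ : ∀ k ∈ N, ContDiffOn ℝ 1 (Q k) (Set.Icc (-d) 0))
    (hQpos : ∀ k ∈ N, ∀ x ∈ Set.Icc (-d) 0, 0 < Q k x)
    (hQ' : ∀ k ∈ N, ∀ x ∈ Set.Icc (-d) 0,
      derivWithin (Q k) (Set.Icc (-d) 0) x = q k x * Q k x)
    (hUf : ∀ x ∈ Set.Icc (-d) 0,
      derivWithin U (Set.Icc (-d) 0) x
        * ∑ k ∈ N,
            ((a k) ^ 2 * k.2 ^ 2 / k.1 ^ 2) * (Q k x) ^ 2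
              * (k.1 ^ 2 - k.2 ^ 2 + (q k x) ^ 2) = 0) :
    ∀ x ∈ Set.Icc (-d) 0, derivWithin U (Set.Icc (-d) 0) x = 0 := by
  have hdI : (-d : ℝ) < 0 := by linarith
  set I := Set.Icc (-d : ℝ) 0 with hIdef
  have hIu : UniqueDiffOn ℝ I := uniqueDiffOn_Icc hdI
  set u := derivWithin U I with hu_def
  have hu_cont : ContinuousOn u I := hU.continuousOn_derivWithin hIu le_rfl
  have hUd : ∀ x ∈ I, HasDerivWithinAt U (u x) I x := fun x hx =>
    ((hU.differentiableOn one_ne_zero) x hx).hasDerivWithinAt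
  have hqd : ∀ k ∈ N, ∀ x ∈ I, HasDerivWithinAt (q k)
      (2 * (u x / U x) * q k x + (k.1 ^ 2 + k.2 ^ 2) - (q k x) ^ 2) I x := by
    intro k hk x hx
    have h := (((hq k hk).differentiableOn one_ne_zero) x hx).hasDerivWithinAt
    rwa [hode k hk x hx] at h
  have hQd : ∀ k ∈ N, ∀ x ∈ I, HasDerivWithinAt (Q k) (q k x * Q k x) I x := by
    intro k hk x hx
    have h := (((hQ k hk).differentiableOn one_ne_zero) x hx).hasDerivWithinAt
    rwa [hQ' k hk x hx] at h
  -- positivity of q on (-d, 0]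
  have qpos : ∀ k ∈ N, ∀ x ∈ Set.Ioc (-d : ℝ) 0, 0 < q k x := by
    intro k hk x hx
    have hk1 := (hN k hk).1
    have hk2 := (hN k hk).2
    have hκ : 0 < k.1 ^ 2 + k.2 ^ 2 := by positivity
    have hmono : StrictMonoOn (fun y => q k y * Q k y / (U y) ^ 2) I := by
      apply strictMonoOn_of_hasDerivWithinAt_pos (convex_Icc _ _)
        (f' := fun y => (k.1 ^ 2 + k.2 ^ 2) * Q k y / (U y) ^ 2)
      · exact (((hq k hk).continuousOn.mul (hQ k hk).continuousOn).div
          ((hU.continuousOn).pow 2) (fun y hy => pow_ne_zero _ (hU0 y hy)))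
      · intro y hy
        have hyI : y ∈ I := interior_subset hy
        have hUy : U y ≠ 0 := hU0 y hyI
        have hder : HasDerivWithinAt (fun y => q k y * Q k y / (U y) ^ 2)
            ((((2 * (u y / U y) * q k y + (k.1 ^ 2 + k.2 ^ 2) - (q k y) ^ 2) * Q k y
              + q k y * (q k y * Q k y)) * (U y) ^ 2
              - q k y * Q k y * ((2 : ℕ) * U y ^ (2 - 1) * u y)) / ((U y) ^ 2) ^ 2) I y := by
          exact ((hqd k hk y hyI).mul (hQd k hk y hyI)).div ((hUd y hyI).pow 2)
            (pow_ne_zero _ hUy)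
        have heq : (((2 * (u y / U y) * q k y + (k.1 ^ 2 + k.2 ^ 2) - (q k y) ^ 2) * Q k y
              + q k y * (q k y * Q k y)) * (U y) ^ 2
              - q k y * Q k y * ((2 : ℕ) * U y ^ (2 - 1) * u y)) / ((U y) ^ 2) ^ 2
            = (k.1 ^ 2 + k.2 ^ 2) * Q k y / (U y) ^ 2 := by
          field_simp
          ring
        rw [heq] at hder
        exact hder.mono interior_subset
      · intro y hy
        have hyI : y ∈ I := interior_subset hy
        have h1 := hQpos k hk y hyI
        have h2 := hU0 y hyI
        have h3 : (0 : ℝ) < (U y) ^ 2 := pow_two_pos_of_ne_zero h2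
        positivity
    have hdm : (-d : ℝ) ∈ I := ⟨le_rfl, hdI.le⟩
    have hxm : x ∈ I := Set.Ioc_subset_Icc_self hx
    have := hmono hdm hxm hx.1
    simp only [hq0 k hk, zero_mul, zero_div] at this
    have hQx := hQpos k hk x hxm
    have hU2 : (0 : ℝ) < (U x) ^ 2 := pow_two_pos_of_ne_zero (hU0 x hxm)
    by_contra hle
    push_neg at hle
    have : q k x * Q k x / (U x) ^ 2 ≤ 0 := by
      apply div_nonpos_of_nonpos_of_nonneg _ hU2.le
      exact mul_nonpos_of_nonpos_of_nonneg hle hQx.le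
    linarith
  -- the functions F, S, P
  set F := fun x => ∑ k ∈ N,
      ((a k) ^ 2 * k.2 ^ 2 / k.1 ^ 2) * (Q k x) ^ 2
        * (k.1 ^ 2 - k.2 ^ 2 + (q k x) ^ 2) with hFdef
  set S := fun x => ∑ k ∈ N,
      (a k) ^ 2 * k.2 ^ 2 / k.1 ^ 2 * k.1 ^ 2 * q k x * (Q k x) ^ 2 with hSdef
  set P := fun x => ∑ k ∈ N,
      (a k) ^ 2 * k.2 ^ 2 / k.1 ^ 2 * (q k x) ^ 2 * (Q k x) ^ 2 with hPdef
  have hFd : ∀ x ∈ I, HasDerivWithinAt F (4 * S x + 4 * (u x / U x) * P x) I x := by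
    intro x hx
    have hsum : HasDerivWithinAt F
        (∑ k ∈ N, (4 * ((a k) ^ 2 * k.2 ^ 2 / k.1 ^ 2 * k.1 ^ 2 * q k x * (Q k x) ^ 2)
          + (u x / U x) * (4 * ((a k) ^ 2 * k.2 ^ 2 / k.1 ^ 2 * (q k x) ^ 2 * (Q k x) ^ 2)))) I x := by
      apply HasDerivWithinAt.fun_sum
      intro k hk
      have h1 := hqd k hk x hx
      have h2 := hQd k hk x hx
      have e := (((h2.pow 2).const_mul ((a k) ^ 2 * k.2 ^ 2 / k.1 ^ 2)).mul
        ((hasDerivWithinAt_const x I (k.1 ^ 2 - k.2 ^ 2)).add (h1.pow 2)))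
      refine HasDerivWithinAt.congr_deriv e ?_
      simp only [Pi.add_apply, Pi.pow_apply]
      push_cast
      ring
    convert hsum using 1
    simp only [hSdef, hPdef, Finset.sum_add_distrib, ← Finset.mul_sum]
    ring
  have hFc : ContinuousOn F I := fun x hx =>
    ((hFd x hx).differentiableWithinAt).continuousWithinAt
  -- positivity of S on (-d, 0]
  have Spos : ∀ x ∈ Set.Ioc (-d : ℝ) 0, 0 < S x := by
    intro x hx
    obtain ⟨k0, hk0N, hk0a⟩ := ha
    apply Finset.sum_pos'
    · intro k hk
      have hq0' := (qpos k hk x hx).le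
      have hk1 := (hN k hk).1
      have hk2 := (hN k hk).2
      have hQ0 := (hQpos k hk x (Set.Ioc_subset_Icc_self hx)).le
      positivity
    · refine ⟨k0, hk0N, ?_⟩
      have h1 := qpos k0 hk0N x hx
      have h2 := hQpos k0 hk0N x (Set.Ioc_subset_Icc_self hx)
      have hk1 := (hN k0 hk0N).1
      have hk2 := (hN k0 hk0N).2
      have ha2 : (0 : ℝ) < (a k0) ^ 2 := pow_two_pos_of_ne_zero hk0a
      positivity
  have Pnonneg : ∀ x, 0 ≤ P x := by
    intro x
    apply Finset.sum_nonneg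
    intro k hk
    positivity
  -- bound on u / U
  obtain ⟨M, hM1, hMb⟩ : ∃ M : ℝ, 1 ≤ M ∧ ∀ x ∈ I, |u x / U x| ≤ M := by
    obtain ⟨z, hz, hzmax⟩ := isCompact_Icc.exists_isMaxOn ⟨-d, le_rfl, hdI.le⟩
      ((hu_cont.div hU.continuousOn hU0).abs)
    exact ⟨max (|u z / U z|) 1, le_max_right _ _,
      fun x hx => le_trans (hzmax hx) (le_max_left _ _)⟩
  have hMpos : (0 : ℝ) < M := lt_of_lt_of_le one_pos hM1
  -- suppose u is somewhere nonzero
  by_contra hcon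
  push_neg at hcon
  obtain ⟨x₀', hx₀'I, hux₀'⟩ := hcon
  obtain ⟨x₀, hx₀, hux₀⟩ : ∃ x₀ ∈ Set.Ioc (-d : ℝ) 0, u x₀ ≠ 0 := by
    rcases eq_or_lt_of_le hx₀'I.1 with h | h
    · -- x₀' = -d
      have hne : (𝓝[Set.Ioc (-d : ℝ) 0] (-d)).NeBot := by
        rw [← mem_closure_iff_nhdsWithin_neBot, closure_Ioc hdI.ne]
        exact ⟨le_rfl, hdI.le⟩
      have hc : Tendsto u (𝓝[Set.Ioc (-d : ℝ) 0] (-d)) (𝓝 (u (-d))) :=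
        (hu_cont.continuousWithinAt ⟨le_rfl, hdI.le⟩).mono Set.Ioc_subset_Icc_self
      have hud : u (-d) ≠ 0 := by rwa [h]
      have hev : ∀ᶠ x in 𝓝[Set.Ioc (-d : ℝ) 0] (-d), u x ≠ 0 :=
        hc (isOpen_compl_singleton.mem_nhds hud)
      obtain ⟨x, hx1, hx2⟩ := (hev.and self_mem_nhdsWithin).exists
      exact ⟨x, hx2, hx1⟩
    · exact ⟨x₀', ⟨h, hx₀'I.2⟩, hux₀'⟩
  -- find the last zero α of u before x₀ (or -d)
  obtain ⟨α, hαJ0, hα_or, hαlt, hαne⟩ : ∃ α, α ∈ Set.Icc (-d) x₀ ∧ (α = -d ∨ u α = 0)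
      ∧ α < x₀ ∧ ∀ x ∈ Set.Ioc α x₀, u x ≠ 0 := by
    by_cases hZ : (Set.Icc (-d) x₀ ∩ u ⁻¹' {0}).Nonempty
    · have hsub : Set.Icc (-d) x₀ ⊆ I := Set.Icc_subset_Icc le_rfl hx₀.2
      have hZc : IsClosed (Set.Icc (-d) x₀ ∩ u ⁻¹' {0}) :=
        (hu_cont.mono hsub).preimage_isClosed_of_isClosed isClosed_Icc isClosed_singleton
      have hZcpt : IsCompact (Set.Icc (-d) x₀ ∩ u ⁻¹' {0}) :=
        isCompact_Icc.of_isClosed_subset hZc (fun x hx => hx.1)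
      have hmem := hZcpt.sSup_mem hZ
      have hu_sup : u (sSup (Set.Icc (-d) x₀ ∩ u ⁻¹' {0})) = 0 := hmem.2
      refine ⟨_, hmem.1, Or.inr hu_sup, ?_, ?_⟩
      · rcases lt_or_eq_of_le hmem.1.2 with h | h
        · exact h
        · exact absurd (h ▸ hu_sup) hux₀
      · intro x hx h0
        have hxZ : x ∈ Set.Icc (-d) x₀ ∩ u ⁻¹' {0} :=
          ⟨⟨le_trans hmem.1.1 hx.1.le, hx.2⟩, h0⟩
        have := le_csSup hZcpt.bddAbove hxZ
        exact absurd this (not_le.mpr hx.1)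
    · refine ⟨-d, ⟨le_rfl, hx₀.1.le⟩, Or.inl rfl, hx₀.1, ?_⟩
      intro x hx h0
      exact hZ ⟨x, ⟨⟨hx.1.le, hx.2⟩, h0⟩⟩
  clear hx₀'I hux₀' x₀'
  have hJI : Set.Icc α x₀ ⊆ I := Set.Icc_subset_Icc hαJ0.1 hx₀.2
  -- F vanishes on [α, x₀]
  have hF0 : ∀ x ∈ Set.Icc α x₀, F x = 0 := by
    have h1 : ∀ x ∈ Set.Ioc α x₀, F x = 0 := by
      intro x hx
      have hxI : x ∈ I := hJI (Set.Ioc_subset_Icc_self hx)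
      have := hUf x hxI
      exact (mul_eq_zero.mp this).resolve_left (hαne x hx)
    intro x hx
    rcases eq_or_lt_of_le hx.1 with h | h
    · -- x = α : by continuity
      rw [← h]
      have hne : (𝓝[Set.Ioc α x₀] α).NeBot := by
        rw [← mem_closure_iff_nhdsWithin_neBot, closure_Ioc hαlt.ne]
        exact ⟨le_rfl, hαlt.le⟩
      have hcF : Tendsto F (𝓝[Set.Ioc α x₀] α) (𝓝 (F α)) :=
        (hFc.continuousWithinAt (hJI ⟨le_rfl, hαlt.le⟩)).mono
          (fun y hy => hJI (Set.Ioc_subset_Icc_self hy))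
      have hcF0 : Tendsto F (𝓝[Set.Ioc α x₀] α) (𝓝 0) := by
        apply Tendsto.congr' _ tendsto_const_nhds
        filter_upwards [self_mem_nhdsWithin] with y hy
        exact (h1 y hy).symm
      exact tendsto_nhds_unique hcF hcF0
    · exact h1 x ⟨h, hx.2⟩
  -- the identity S + (u/U) P = 0 on [α, x₀]
  have huJ : UniqueDiffOn ℝ (Set.Icc α x₀) := uniqueDiffOn_Icc hαlt
  have hid : ∀ x ∈ Set.Icc α x₀, S x + u x / U x * P x = 0 := by
    intro x hx
    have h1 : HasDerivWithinAt F (4 * S x + 4 * (u x / U x) * P x) (Set.Icc α x₀) x :=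
      (hFd x (hJI hx)).mono hJI
    have h2 : HasDerivWithinAt F 0 (Set.Icc α x₀) x :=
      (hasDerivWithinAt_const x (Set.Icc α x₀) (0 : ℝ)).congr hF0 (hF0 x hx)
    have e1 := h1.derivWithin (huJ x hx)
    have e2 := h2.derivWithin (huJ x hx)
    rw [e2] at e1
    linarith
  -- case analysis on α
  rcases eq_or_lt_of_le hαJ0.1 with hαd | hα_gt
  · -- α = -d : pick x close to -d where all q k are small
    have hαd' : α = -d := hαd.symm
    subst hαd'
    have hne : (𝓝[Set.Ioc (-d : ℝ) x₀] (-d)).NeBot := by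
      rw [← mem_closure_iff_nhdsWithin_neBot, closure_Ioc hαlt.ne]
      exact ⟨le_rfl, hαlt.le⟩
    have hev : ∀ᶠ x in 𝓝[Set.Ioc (-d : ℝ) x₀] (-d), ∀ k ∈ N, q k x < k.1 ^ 2 / (2 * M) := by
      rw [Filter.eventually_all_finset]
      intro k hk
      have hk1 := (hN k hk).1
      have hpos : 0 < k.1 ^ 2 / (2 * M) := by positivity
      have hc : Tendsto (q k) (𝓝[Set.Ioc (-d : ℝ) x₀] (-d)) (𝓝 (q k (-d))) :=
        ((hq k hk).continuousOn.continuousWithinAt ⟨le_rfl, hdI.le⟩).mono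
          (fun y hy => ⟨hy.1.le, le_trans hy.2 hx₀.2⟩)
      rw [hq0 k hk] at hc
      exact hc (Iio_mem_nhds hpos)
    obtain ⟨x, hxq, hxm⟩ := (hev.and self_mem_nhdsWithin).exists
    have hxIoc : x ∈ Set.Ioc (-d : ℝ) 0 := ⟨hxm.1, le_trans hxm.2 hx₀.2⟩
    have hxJ : x ∈ Set.Icc (-d) x₀ := Set.Ioc_subset_Icc_self hxm
    have hidx := hid x hxJ
    have hSx := Spos x hxIoc
    -- S x ≤ M * P x
    have hS_le : S x ≤ M * P x := by
      have h1 : S x = -(u x / U x) * P x := by linarith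
      have h2 : -(u x / U x) ≤ |u x / U x| := neg_le_abs _
      calc S x = -(u x / U x) * P x := h1
        _ ≤ |u x / U x| * P x := mul_le_mul_of_nonneg_right h2 (Pnonneg x)
        _ ≤ M * P x := mul_le_mul_of_nonneg_right (hMb x (hJI hxJ)) (Pnonneg x)
    -- M * P x ≤ S x / 2
    have hP_le : M * P x ≤ S x / 2 := by
      have : M * P x = ∑ k ∈ N,
          M * ((a k) ^ 2 * k.2 ^ 2 / k.1 ^ 2 * (q k x) ^ 2 * (Q k x) ^ 2) := by
        rw [hPdef, Finset.mul_sum]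
      rw [this, hSdef]
      have h2 : (∑ k ∈ N, (a k) ^ 2 * k.2 ^ 2 / k.1 ^ 2 * k.1 ^ 2 * q k x * (Q k x) ^ 2) / 2
          = ∑ k ∈ N, ((a k) ^ 2 * k.2 ^ 2 / k.1 ^ 2 * k.1 ^ 2 * q k x * (Q k x) ^ 2) / 2 := by
        rw [Finset.sum_div]
      rw [h2]
      apply Finset.sum_le_sum
      intro k hk
      have hqnn := (qpos k hk x hxIoc).le
      have hqlt := (hxq k hk).le
      have h2Mq : 2 * M * q k x ≤ k.1 ^ 2 := by
        rw [← le_div_iff₀' (by positivity)]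
        exact hqlt
      have hC : (0 : ℝ) ≤ (a k) ^ 2 * k.2 ^ 2 / k.1 ^ 2 := by positivity
      have hQ2 : (0 : ℝ) ≤ (Q k x) ^ 2 := sq_nonneg _
      have key : 0 ≤ (k.1 ^ 2 - 2 * M * q k x) *
          ((a k) ^ 2 * k.2 ^ 2 / k.1 ^ 2 * q k x * (Q k x) ^ 2) := by
        apply mul_nonneg (by linarith)
        exact mul_nonneg (mul_nonneg hC hqnn) hQ2
      nlinarith [key]
    linarith
  · -- α > -d, so u α = 0
    have huα : u α = 0 := hα_or.resolve_left (by intro h; rw [h] at hα_gt; exact lt_irrefl _ hα_gt)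
    have hidα := hid α ⟨le_rfl, hαlt.le⟩
    rw [huα] at hidα
    simp only [zero_div, zero_mul, add_zero] at hidα
    have := Spos α ⟨hα_gt, le_trans hαlt.le hx₀.2⟩
    linarith
end

section
/- Let d > 0, let U ∈ C²([−d,0];ℝ) be nonvanishing, let k₁ > 0 and k₂ > 0, and let a ∈ ℝ. Let q ∈ C¹([−d,0];ℝ) satisfy q′ = 2(U′/U)q + (k₁²+k₂²) − q² on [−d,0] with q(−d) = 0, and let Q ∈ C²([−d,0];ℝ) satisfy Q′ = qQ. On Ω̄ = ℝ²×[−d,0] define v₂(x) = 4a (k₂ Q(x₃)/(k₁ U(x₃))) sin(k₁x₁) sin(k₂x₂) and v₃(x) = −4a (Q(x₃) q(x₃)/(k₁ U(x₃))) sin(k₁x₁) cos(k₂x₂). Then for all (x₂,x₃) ∈ ℝ×[−d,0]: (k₁/2π)·∫₀^{2π/k₁} [ (∂₂² − ∂₃²)(v₂v₃) + ∂₂∂₃(v₃² − v₂²) ](x₁,x₂,x₃) dx₁ = −8 (U′(x₃)/U(x₃)³) · a² (k₂/k₁²) · Q(x₃)² · (k₁² − k₂² + q(x₃)²) · sin(2k₂x₂).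 -/
lemma hda_sin (k t : ℝ) : HasDerivAt (fun r => Real.sin (k*r)) (k * Real.cos (k*t)) t := by
  simpa [mul_comm, Function.comp_def] using (Real.hasDerivAt_sin (k*t)).comp t ((hasDerivAt_id t).const_mul k)

lemma hda_cos (k t : ℝ) : HasDerivAt (fun r => Real.cos (k*r)) (-(k * Real.sin (k*t))) t := by
  simpa [mul_comm, Function.comp_def] using (Real.hasDerivAt_cos (k*t)).comp t ((hasDerivAt_id t).const_mul k)

lemma hda_sin_sq (k t : ℝ) : HasDerivAt (fun r => Real.sin (k*r)^2)
    (2*k*Real.sin (k*t)*Real.cos (k*t)) t := by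
  simpa [mul_comm, mul_assoc, mul_left_comm] using (hda_sin k t).fun_pow 2

lemma hda_cos_sq (k t : ℝ) : HasDerivAt (fun r => Real.cos (k*r)^2)
    (-(2*k*Real.sin (k*t)*Real.cos (k*t))) t := by
  have := (hda_cos k t).fun_pow 2
  refine this.congr_deriv ?_
  ring

lemma hda_sincos (k t : ℝ) : HasDerivAt (fun r => Real.sin (k*r) * Real.cos (k*r))
    (k*(Real.cos (k*t)^2 - Real.sin (k*t)^2)) t := by
  have := (hda_sin k t).fun_mul (hda_cos k t)
  refine this.congr_deriv ?_
  ring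

lemma int_sin_sq (k : ℝ) (hk : k ≠ 0) :
    ∫ x in (0:ℝ)..(2*Real.pi/k), Real.sin (k*x)^2 = Real.pi/k := by
  rw [intervalIntegral.integral_comp_mul_left (fun x => Real.sin x ^ 2) hk]
  have : k * (2*Real.pi/k) = 2*Real.pi := by field_simp
  rw [this]
  rw [smul_eq_mul, integral_sin_sq]
  rw [Real.sin_two_pi]
  simp
  field_simp


/-- Partial derivative in the second coordinate of a scalar field on `ℝ³ = ℝ×ℝ×ℝ`. -/
noncomputable def d2 (f : ℝ × ℝ × ℝ → ℝ) (x : ℝ × ℝ × ℝ) : ℝ :=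
  deriv (fun t => f (x.1, t, x.2.2)) x.2.1

/-- Partial derivative in the third coordinate, within the slab `x₃ ∈ [−d,0]`. -/
noncomputable def d3 (d : ℝ) (f : ℝ × ℝ × ℝ → ℝ) (x : ℝ × ℝ × ℝ) : ℝ :=
  derivWithin (fun t => f (x.1, x.2.1, t)) (Set.Icc (-d) 0) x.2.2

set_option maxHeartbeats 2000000 in
/-- For a single Fourier mode of the linearized kernel, the
`x₁`-average of `(∂₂² − ∂₃²)(v₂v₃) + ∂₂∂₃(v₃² − v₂²)` equals
`−8(U′/U³)a²(k₂/k₁²)Q²(k₁² − k₂² + q²)sin(2k₂x₂)`. -/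
theorem stmt_18 (d : ℝ) (hd : 0 < d) (U : ℝ → ℝ)
    (hU : ContDiffOn ℝ 2 U (Set.Icc (-d) 0))
    (hU0 : ∀ t ∈ Set.Icc (-d) 0, U t ≠ 0)
    (k₁ k₂ a : ℝ) (hk₁ : 0 < k₁) (hk₂ : 0 < k₂)
    (q Q : ℝ → ℝ)
    (hq : ContDiffOn ℝ 1 q (Set.Icc (-d) 0))
    (hode : ∀ x ∈ Set.Icc (-d) 0,
      derivWithin q (Set.Icc (-d) 0) x
        = 2 * (derivWithin U (Set.Icc (-d) 0) x / U x) * q x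
          + (k₁ ^ 2 + k₂ ^ 2) - (q x) ^ 2)
    (hq0 : q (-d) = 0)
    (hQ : ContDiffOn ℝ 2 Q (Set.Icc (-d) 0))
    (hQ' : ∀ x ∈ Set.Icc (-d) 0, derivWithin Q (Set.Icc (-d) 0) x = q x * Q x)
    (v₂ v₃ : ℝ × ℝ × ℝ → ℝ)
    (hv₂ : ∀ x : ℝ × ℝ × ℝ,
      v₂ x = 4 * a * (k₂ * Q x.2.2 / (k₁ * U x.2.2))
        * Real.sin (k₁ * x.1) * Real.sin (k₂ * x.2.1))
    (hv₃ : ∀ x : ℝ × ℝ × ℝ,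
      v₃ x = -4 * a * (Q x.2.2 * q x.2.2 / (k₁ * U x.2.2))
        * Real.sin (k₁ * x.1) * Real.cos (k₂ * x.2.1)) :
    ∀ x₂ : ℝ, ∀ x₃ ∈ Set.Icc (-d) 0,
      (k₁ / (2 * Real.pi)) *
        ∫ x₁ in (0 : ℝ)..(2 * Real.pi / k₁),
          (d2 (d2 (fun y => v₂ y * v₃ y)) (x₁, x₂, x₃)
            - d3 d (d3 d (fun y => v₂ y * v₃ y)) (x₁, x₂, x₃)
            + d2 (d3 d (fun y => (v₃ y) ^ 2 - (v₂ y) ^ 2)) (x₁, x₂, x₃))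
      = -8 * (derivWithin U (Set.Icc (-d) 0) x₃ / (U x₃) ^ 3) * a ^ 2 * (k₂ / k₁ ^ 2)
          * (Q x₃) ^ 2 * (k₁ ^ 2 - k₂ ^ 2 + (q x₃) ^ 2) * Real.sin (2 * k₂ * x₂) := by

  intro x₂ x₃ hx₃
  have hsu : UniqueDiffOn ℝ (Set.Icc (-d) (0:ℝ)) := uniqueDiffOn_Icc (by linarith)
  have hUd : DifferentiableOn ℝ U (Set.Icc (-d) 0) := hU.differentiableOn (by norm_num)
  have hqd : DifferentiableOn ℝ q (Set.Icc (-d) 0) := hq.differentiableOn (by norm_num)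
  have hQd : DifferentiableOn ℝ Q (Set.Icc (-d) 0) := hQ.differentiableOn (by norm_num)
  -- master rewrites of the products
  have hprod : ∀ y : ℝ × ℝ × ℝ, v₂ y * v₃ y
      = (-16*a^2*k₂/k₁^2) * (q y.2.2 * (Q y.2.2^2 / U y.2.2^2))
        * (Real.sin (k₁*y.1)^2 * (Real.sin (k₂*y.2.1) * Real.cos (k₂*y.2.1))) := by
    intro y; rw [hv₂ y, hv₃ y]; ring
  have hdiff : ∀ y : ℝ × ℝ × ℝ, (v₃ y)^2 - (v₂ y)^2
      = 16*a^2/k₁^2 * ((q y.2.2^2 * Real.cos (k₂*y.2.1)^2 - k₂^2 * Real.sin (k₂*y.2.1)^2)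
          * (Q y.2.2^2 / U y.2.2^2)) * Real.sin (k₁*y.1)^2 := by
    intro y; rw [hv₂ y, hv₃ y]; ring
  -- derivative of q * Q²/U² on the slab
  have hF : ∀ t ∈ Set.Icc (-d) (0:ℝ),
      HasDerivWithinAt (fun r => q r * (Q r^2 / U r^2))
        (((k₁^2 + k₂^2) + q t^2) * (Q t^2 / U t^2)) (Set.Icc (-d) 0) t := by
    intro t ht
    have hu := (hUd t ht).hasDerivWithinAt
    have hqt := (hqd t ht).hasDerivWithinAt
    have hQt := (hQd t ht).hasDerivWithinAt
    have h := hqt.fun_mul ((hQt.fun_pow 2).fun_div (hu.fun_pow 2) (pow_ne_zero 2 (hU0 t ht)))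
    refine h.congr_deriv ?_
    rw [hode t ht, hQ' t ht]
    have h0 := hU0 t ht
    field_simp
    ring
  -- derivative of (k² + q²) * Q²/U² at x₃
  have hG1 : HasDerivWithinAt (fun t => ((k₁^2 + k₂^2) + q t^2) * (Q t^2 / U t^2))
      (((2*q x₃^2 - 2*(k₁^2 + k₂^2))*derivWithin U (Set.Icc (-d) 0) x₃ + 4*q x₃*(k₁^2 + k₂^2)*U x₃) * (Q x₃^2 / U x₃^3)) (Set.Icc (-d) 0) x₃ := by
    have hu := (hUd x₃ hx₃).hasDerivWithinAt
    have hqt := (hqd x₃ hx₃).hasDerivWithinAt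
    have hQt := (hQd x₃ hx₃).hasDerivWithinAt
    have h := ((hqt.fun_pow 2).const_add (k₁^2 + k₂^2)).fun_mul
      ((hQt.fun_pow 2).fun_div (hu.fun_pow 2) (pow_ne_zero 2 (hU0 x₃ hx₃)))
    refine h.congr_deriv ?_
    rw [hode x₃ hx₃, hQ' x₃ hx₃]
    have h0 := hU0 x₃ hx₃
    field_simp
    ring
  -- derivative of (q²C - k₂²Sn) * Q²/U² at x₃
  have hE : ∀ C Sn : ℝ,
      HasDerivWithinAt (fun r => (q r^2 * C - k₂^2 * Sn) * (Q r^2 / U r^2))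
        ((q x₃^2*((2*q x₃*U x₃ - 2*derivWithin U (Set.Icc (-d) 0) x₃) * (Q x₃^2 / U x₃^3)) + 2*q x₃*(2*(derivWithin U (Set.Icc (-d) 0) x₃/U x₃)*q x₃ + (k₁^2 + k₂^2) - q x₃^2)*(Q x₃^2 / U x₃^2))*C + (-(k₂^2)*((2*q x₃*U x₃ - 2*derivWithin U (Set.Icc (-d) 0) x₃) * (Q x₃^2 / U x₃^3)))*Sn) (Set.Icc (-d) 0) x₃ := by
    intro C Sn
    have hu := (hUd x₃ hx₃).hasDerivWithinAt
    have hqt := (hqd x₃ hx₃).hasDerivWithinAt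
    have hQt := (hQd x₃ hx₃).hasDerivWithinAt
    have h := (((hqt.fun_pow 2).mul_const C).sub_const (k₂^2 * Sn)).fun_mul
      ((hQt.fun_pow 2).fun_div (hu.fun_pow 2) (pow_ne_zero 2 (hU0 x₃ hx₃)))
    refine h.congr_deriv ?_
    rw [hode x₃ hx₃, hQ' x₃ hx₃]
    have h0 := hU0 x₃ hx₃
    field_simp
    ring
  -- inner d2 of v₂v₃
  have hd2v : ∀ x₁ t : ℝ, d2 (fun y => v₂ y * v₃ y) (x₁, t, x₃)
      = (-16*a^2*k₂/k₁^2) * (q x₃ * (Q x₃^2 / U x₃^2)) * Real.sin (k₁*x₁)^2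
        * (k₂*(Real.cos (k₂*t)^2 - Real.sin (k₂*t)^2)) := by
    intro x₁ t
    have h0 : d2 (fun y => v₂ y * v₃ y) (x₁, t, x₃)
        = deriv (fun r => v₂ (x₁, r, x₃) * v₃ (x₁, r, x₃)) t := rfl
    rw [h0]
    have h2 : (fun r => v₂ (x₁, r, x₃) * v₃ (x₁, r, x₃))
        = fun r => ((-16*a^2*k₂/k₁^2) * (q x₃ * (Q x₃^2 / U x₃^2)) * Real.sin (k₁*x₁)^2)
            * (Real.sin (k₂*r) * Real.cos (k₂*r)) := by
      funext r; rw [hv₂, hv₃]; ring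
    rw [h2, ((hda_sincos k₂ t).const_mul
      ((-16*a^2*k₂/k₁^2) * (q x₃ * (Q x₃^2 / U x₃^2)) * Real.sin (k₁*x₁)^2)).deriv]
  -- T1
  have hT1 : ∀ x₁ : ℝ, d2 (d2 (fun y => v₂ y * v₃ y)) (x₁, x₂, x₃)
      = ((-16*a^2*k₂/k₁^2) * (q x₃ * (Q x₃^2 / U x₃^2)) * Real.sin (k₁*x₁)^2)
        * (k₂*((-(2*k₂*(Real.sin (k₂*x₂) * Real.cos (k₂*x₂)))) - 2*k₂*(Real.sin (k₂*x₂) * Real.cos (k₂*x₂)))) := by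
    intro x₁
    have h0 : d2 (d2 (fun y => v₂ y * v₃ y)) (x₁, x₂, x₃)
        = deriv (fun t => d2 (fun y => v₂ y * v₃ y) (x₁, t, x₃)) x₂ := rfl
    rw [h0]
    have h2 : (fun t => d2 (fun y => v₂ y * v₃ y) (x₁, t, x₃))
        = fun t => ((-16*a^2*k₂/k₁^2) * (q x₃ * (Q x₃^2 / U x₃^2)) * Real.sin (k₁*x₁)^2 * k₂)
            * (Real.cos (k₂*t)^2 - Real.sin (k₂*t)^2) := by
      funext t; rw [hd2v x₁ t]; ring
    rw [h2, (((hda_cos_sq k₂ x₂).fun_sub (hda_sin_sq k₂ x₂)).const_mul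
      ((-16*a^2*k₂/k₁^2) * (q x₃ * (Q x₃^2 / U x₃^2)) * Real.sin (k₁*x₁)^2 * k₂)).deriv]
    ring
  -- inner d3 of v₂v₃ on the slab
  have hd3v : ∀ x₁ : ℝ, ∀ t ∈ Set.Icc (-d) (0:ℝ),
      d3 d (fun y => v₂ y * v₃ y) (x₁, x₂, t)
      = ((-16*a^2*k₂/k₁^2) * (Real.sin (k₁*x₁)^2 * (Real.sin (k₂*x₂) * Real.cos (k₂*x₂))))
          * (((k₁^2 + k₂^2) + q t^2) * (Q t^2 / U t^2)) := by
    intro x₁ t ht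
    have h0 : d3 d (fun y => v₂ y * v₃ y) (x₁, x₂, t)
        = derivWithin (fun r => v₂ (x₁, x₂, r) * v₃ (x₁, x₂, r)) (Set.Icc (-d) 0) t := rfl
    rw [h0]
    have h2 : (fun r => v₂ (x₁, x₂, r) * v₃ (x₁, x₂, r))
        = fun r => ((-16*a^2*k₂/k₁^2) * (Real.sin (k₁*x₁)^2 * (Real.sin (k₂*x₂) * Real.cos (k₂*x₂))))
            * (q r * (Q r^2 / U r^2)) := by
      funext r; rw [hv₂, hv₃]; ring
    rw [h2, (((hF t ht).const_mul
      ((-16*a^2*k₂/k₁^2) * (Real.sin (k₁*x₁)^2 * (Real.sin (k₂*x₂) * Real.cos (k₂*x₂))))).derivWithin (hsu t ht))]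
  -- T2
  have hT2 : ∀ x₁ : ℝ, d3 d (d3 d (fun y => v₂ y * v₃ y)) (x₁, x₂, x₃)
      = ((-16*a^2*k₂/k₁^2) * (Real.sin (k₁*x₁)^2 * (Real.sin (k₂*x₂) * Real.cos (k₂*x₂)))) * (((2*q x₃^2 - 2*(k₁^2 + k₂^2))*derivWithin U (Set.Icc (-d) 0) x₃ + 4*q x₃*(k₁^2 + k₂^2)*U x₃) * (Q x₃^2 / U x₃^3)) := by
    intro x₁
    have h0 : d3 d (d3 d (fun y => v₂ y * v₃ y)) (x₁, x₂, x₃)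
        = derivWithin (fun t => d3 d (fun y => v₂ y * v₃ y) (x₁, x₂, t)) (Set.Icc (-d) 0) x₃ := rfl
    rw [h0]
    rw [derivWithin_congr (fun t ht => hd3v x₁ t ht) (hd3v x₁ x₃ hx₃)]
    rw [(hG1.const_mul
      ((-16*a^2*k₂/k₁^2) * (Real.sin (k₁*x₁)^2 * (Real.sin (k₂*x₂) * Real.cos (k₂*x₂))))).derivWithin (hsu x₃ hx₃)]
  -- inner d3 of v₃² - v₂²
  have hd3d : ∀ x₁ t : ℝ, d3 d (fun y => (v₃ y)^2 - (v₂ y)^2) (x₁, t, x₃)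
      = (16*a^2/k₁^2 * ((q x₃^2*((2*q x₃*U x₃ - 2*derivWithin U (Set.Icc (-d) 0) x₃) * (Q x₃^2 / U x₃^3)) + 2*q x₃*(2*(derivWithin U (Set.Icc (-d) 0) x₃/U x₃)*q x₃ + (k₁^2 + k₂^2) - q x₃^2)*(Q x₃^2 / U x₃^2)) * Real.cos (k₂*t)^2 + (-(k₂^2)*((2*q x₃*U x₃ - 2*derivWithin U (Set.Icc (-d) 0) x₃) * (Q x₃^2 / U x₃^3))) * Real.sin (k₂*t)^2))
        * Real.sin (k₁*x₁)^2 := by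
    intro x₁ t
    have h0 : d3 d (fun y => (v₃ y)^2 - (v₂ y)^2) (x₁, t, x₃)
        = derivWithin (fun r => (v₃ (x₁, t, r))^2 - (v₂ (x₁, t, r))^2) (Set.Icc (-d) 0) x₃ := rfl
    rw [h0]
    have h2 : (fun r => (v₃ (x₁, t, r))^2 - (v₂ (x₁, t, r))^2)
        = fun r => 16*a^2/k₁^2 * ((q r^2 * Real.cos (k₂*t)^2 - k₂^2 * Real.sin (k₂*t)^2)
            * (Q r^2 / U r^2)) * Real.sin (k₁*x₁)^2 := by
      funext r; rw [hv₂, hv₃]; ring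
    rw [h2, ((((hE (Real.cos (k₂*t)^2) (Real.sin (k₂*t)^2)).const_mul
      (16*a^2/k₁^2)).mul_const (Real.sin (k₁*x₁)^2)).derivWithin (hsu x₃ hx₃))]
  -- T3
  have hT3 : ∀ x₁ : ℝ, d2 (d3 d (fun y => (v₃ y)^2 - (v₂ y)^2)) (x₁, x₂, x₃)
      = (16*a^2/k₁^2 * ((q x₃^2*((2*q x₃*U x₃ - 2*derivWithin U (Set.Icc (-d) 0) x₃) * (Q x₃^2 / U x₃^3)) + 2*q x₃*(2*(derivWithin U (Set.Icc (-d) 0) x₃/U x₃)*q x₃ + (k₁^2 + k₂^2) - q x₃^2)*(Q x₃^2 / U x₃^2))*(-(2*k₂*(Real.sin (k₂*x₂) * Real.cos (k₂*x₂)))) + (-(k₂^2)*((2*q x₃*U x₃ - 2*derivWithin U (Set.Icc (-d) 0) x₃) * (Q x₃^2 / U x₃^3)))*(2*k₂*(Real.sin (k₂*x₂) * Real.cos (k₂*x₂))))) * Real.sin (k₁*x₁)^2 := by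
    intro x₁
    have h0 : d2 (d3 d (fun y => (v₃ y)^2 - (v₂ y)^2)) (x₁, x₂, x₃)
        = deriv (fun t => d3 d (fun y => (v₃ y)^2 - (v₂ y)^2) (x₁, t, x₃)) x₂ := rfl
    rw [h0]
    have h2 : (fun t => d3 d (fun y => (v₃ y)^2 - (v₂ y)^2) (x₁, t, x₃))
        = fun t => (16*a^2/k₁^2 * Real.sin (k₁*x₁)^2)
            * ((q x₃^2*((2*q x₃*U x₃ - 2*derivWithin U (Set.Icc (-d) 0) x₃) * (Q x₃^2 / U x₃^3)) + 2*q x₃*(2*(derivWithin U (Set.Icc (-d) 0) x₃/U x₃)*q x₃ + (k₁^2 + k₂^2) - q x₃^2)*(Q x₃^2 / U x₃^2)) * Real.cos (k₂*t)^2 + (-(k₂^2)*((2*q x₃*U x₃ - 2*derivWithin U (Set.Icc (-d) 0) x₃) * (Q x₃^2 / U x₃^3))) * Real.sin (k₂*t)^2) := by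
      funext t; rw [hd3d x₁ t]; ring
    rw [h2, ((((hda_cos_sq k₂ x₂).const_mul (q x₃^2*((2*q x₃*U x₃ - 2*derivWithin U (Set.Icc (-d) 0) x₃) * (Q x₃^2 / U x₃^3)) + 2*q x₃*(2*(derivWithin U (Set.Icc (-d) 0) x₃/U x₃)*q x₃ + (k₁^2 + k₂^2) - q x₃^2)*(Q x₃^2 / U x₃^2))).fun_add
      ((hda_sin_sq k₂ x₂).const_mul (-(k₂^2)*((2*q x₃*U x₃ - 2*derivWithin U (Set.Icc (-d) 0) x₃) * (Q x₃^2 / U x₃^3))))).const_mul (16*a^2/k₁^2 * Real.sin (k₁*x₁)^2)).deriv]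
    ring
  -- pointwise value of the integrand
  have key : ∀ x₁ : ℝ,
      d2 (d2 (fun y => v₂ y * v₃ y)) (x₁, x₂, x₃)
        - d3 d (d3 d (fun y => v₂ y * v₃ y)) (x₁, x₂, x₃)
        + d2 (d3 d (fun y => (v₃ y)^2 - (v₂ y)^2)) (x₁, x₂, x₃)
      = Real.sin (k₁*x₁)^2 * ((-16*a^2*k₂/k₁^2) * (q x₃ * (Q x₃^2 / U x₃^2)) * (k₂*(-(2*k₂*(Real.sin (k₂*x₂) * Real.cos (k₂*x₂))) - 2*k₂*(Real.sin (k₂*x₂) * Real.cos (k₂*x₂)))) - (-16*a^2*k₂/k₁^2) * (Real.sin (k₂*x₂) * Real.cos (k₂*x₂)) * (((2*q x₃^2 - 2*(k₁^2 + k₂^2))*derivWithin U (Set.Icc (-d) 0) x₃ + 4*q x₃*(k₁^2 + k₂^2)*U x₃) * (Q x₃^2 / U x₃^3)) + 16*a^2/k₁^2 * ((q x₃^2*((2*q x₃*U x₃ - 2*derivWithin U (Set.Icc (-d) 0) x₃) * (Q x₃^2 / U x₃^3)) + 2*q x₃*(2*(derivWithin U (Set.Icc (-d) 0) x₃/U x₃)*q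 x₃ + (k₁^2 + k₂^2) - q x₃^2)*(Q x₃^2 / U x₃^2))*(-(2*k₂*(Real.sin (k₂*x₂) * Real.cos (k₂*x₂)))) + (-(k₂^2)*((2*q x₃*U x₃ - 2*derivWithin U (Set.Icc (-d) 0) x₃) * (Q x₃^2 / U x₃^3)))*(2*k₂*(Real.sin (k₂*x₂) * Real.cos (k₂*x₂))))) := by
    intro x₁
    rw [hT1 x₁, hT2 x₁, hT3 x₁]
    ring
  simp only [key]
  rw [intervalIntegral.integral_mul_const, int_sin_sq k₁ (ne_of_gt hk₁)]
  have hsin2 : Real.sin (2*k₂*x₂) = 2 * Real.sin (k₂*x₂) * Real.cos (k₂*x₂) := by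
    rw [mul_assoc]; exact Real.sin_two_mul _
  rw [hsin2]
  have h0 := hU0 x₃ hx₃
  have hk := ne_of_gt hk₁
  have hpi := Real.pi_ne_zero
  field_simp
  ring
end
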